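/- arXiv:2510.06493 — 2 statements merged into one kernel-verified Lean document; each statement's English description precedes it below -/
import Mathlib

section
/- For every n ≥ 2, |P_B^{(0,0)}(n)| + |P_B^{(1,0)}(n)| + |P_B^{(1,2)}(n)| + |P_B^{(0,2)}(n)| = B_n + 6, where B_n is the total number of top-cut patterns of size n occurring in T. -/
/-- Whether the unit triangle at row `r`, column `c` of the Sierpiński triangle is filled:
upward units `(r, 2j)` are filled iff `choose r j` is odd; downward units are unfilled. -/
def filled (r c : ℕ) : Bool :=
  decide (c % 2 = 0 ∧ Nat.choose r (c / 2) % 2 = 1)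

/-- The upward pattern of size `n` at upward position `(r, c)`. -/
def upPattern (n r c : ℕ) : ℕ × ℕ → Bool := fun q =>
  if q.1 < n ∧ q.2 ≤ 2 * q.1 then filled (r + q.1) (c + q.2) else false

/-- The set of all upward patterns of size `n` occurring in the Sierpiński triangle. -/
def Pup (n : ℕ) : Set (ℕ × ℕ → Bool) :=
  { p | ∃ r c : ℕ, c % 2 = 0 ∧ c ≤ 2 * r ∧ p = upPattern n r c }

/-- The downward pattern of size `n` at downward position `(r, c)`. -/
def downPattern (n r c : ℕ) : ℕ × ℕ → Bool := fun q =>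
  if q.1 < n ∧ q.2 ≤ 2 * (n - 1 - q.1) then filled (r + q.1) (c + 2 * q.1 + q.2) else false

/-- The set of all downward patterns of size `n` occurring in the Sierpiński triangle. -/
def Pdown (n : ℕ) : Set (ℕ × ℕ → Bool) :=
  { p | ∃ r c : ℕ, c % 2 = 1 ∧ c + 2 * (n - 1) ≤ 2 * r ∧ p = downPattern n r c }

/-- The top-cut pattern of size `n` at upward position `(r, c)` (apex unit removed). -/
def topCutPattern (n r c : ℕ) : ℕ × ℕ → Bool := fun q =>
  if 1 ≤ q.1 ∧ q.1 < n ∧ q.2 ≤ 2 * q.1 then filled (r + q.1) (c + q.2) else false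

/-- The set of all top-cut patterns of size `n` occurring in the Sierpiński triangle. -/
def PtopCut (n : ℕ) : Set (ℕ × ℕ → Bool) :=
  { p | ∃ r c : ℕ, c % 2 = 0 ∧ c ≤ 2 * r ∧ p = topCutPattern n r c }

/-- The bottom-cut pattern of size `n` at upward position `(r, c)`
(both bottom corner units removed). -/
def botCutPattern (n r c : ℕ) : ℕ × ℕ → Bool := fun q =>
  if (q.1 < n ∧ q.2 ≤ 2 * q.1) ∧ ¬(q.1 = n - 1 ∧ (q.2 = 0 ∨ q.2 = 2 * (n - 1)))
  then filled (r + q.1) (c + q.2) else false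

/-- The set of all bottom-cut patterns of size `n` occurring in the Sierpiński triangle. -/
def PbotCut (n : ℕ) : Set (ℕ × ℕ → Bool) :=
  { p | ∃ r c : ℕ, c % 2 = 0 ∧ c ≤ 2 * r ∧ p = botCutPattern n r c }

/-- The fully-cut pattern of size `n` at upward position `(r, c)`
(all three corner units removed). -/
def fullyCutPattern (n r c : ℕ) : ℕ × ℕ → Bool := fun q =>
  if (q.1 < n ∧ q.2 ≤ 2 * q.1) ∧ q ≠ (0, 0) ∧ ¬(q.1 = n - 1 ∧ (q.2 = 0 ∨ q.2 = 2 * (n - 1)))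
  then filled (r + q.1) (c + q.2) else false

/-- The set of all fully-cut patterns of size `n` occurring in the Sierpiński triangle. -/
def PfullyCut (n : ℕ) : Set (ℕ × ℕ → Bool) :=
  { p | ∃ r c : ℕ, c % 2 = 0 ∧ c ≤ 2 * r ∧ p = fullyCutPattern n r c }

/-- Upward patterns of size `m` occurring inside the approximation `T_N`
(rows `0, …, 2^N - 1`). -/
def PupN (N m : ℕ) : Set (ℕ × ℕ → Bool) :=
  { p | ∃ r c : ℕ, c % 2 = 0 ∧ c ≤ 2 * r ∧ r + m ≤ 2 ^ N ∧ p = upPattern m r c }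

/-- Upward patterns of size `n` at positions with `r ≡ ρ [MOD 2]` and `c ≡ γ [MOD 4]`. -/
def PupRC (n ρ γ : ℕ) : Set (ℕ × ℕ → Bool) :=
  { p | ∃ r c : ℕ, c % 2 = 0 ∧ c ≤ 2 * r ∧ r % 2 = ρ ∧ c % 4 = γ ∧ p = upPattern n r c }

/-- Downward patterns of size `n` at positions with `r ≡ ρ [MOD 2]` and `c ≡ γ [MOD 4]`. -/
def PdownRC (n ρ γ : ℕ) : Set (ℕ × ℕ → Bool) :=
  { p | ∃ r c : ℕ, c % 2 = 1 ∧ c + 2 * (n - 1) ≤ 2 * r ∧ r % 2 = ρ ∧ c % 4 = γ ∧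
      p = downPattern n r c }

/-- Top-cut patterns of size `n` at positions with `r ≡ ρ [MOD 2]` and `c ≡ γ [MOD 4]`. -/
def PtopCutRC (n ρ γ : ℕ) : Set (ℕ × ℕ → Bool) :=
  { p | ∃ r c : ℕ, c % 2 = 0 ∧ c ≤ 2 * r ∧ r % 2 = ρ ∧ c % 4 = γ ∧ p = topCutPattern n r c }

/-- Fully-cut patterns of size `n` at positions with `r ≡ ρ [MOD 2]` and `c ≡ γ [MOD 4]`. -/
def PfullyCutRC (n ρ γ : ℕ) : Set (ℕ × ℕ → Bool) :=
  { p | ∃ r c : ℕ, c % 2 = 0 ∧ c ≤ 2 * r ∧ r % 2 = ρ ∧ c % 4 = γ ∧ p = fullyCutPattern n r c }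

/-- The everywhere-unfilled upward pattern. -/
def blankUp : ℕ × ℕ → Bool := fun _ => false

/-- The upward pattern that is filled exactly at the apex `(0, 0)`. -/
def topUp : ℕ × ℕ → Bool := fun q => decide (q = (0, 0))

/-- The size-`N` upward pattern that is filled exactly at the bottom-left corner `(N-1, 0)`. -/
def botleftUp (N : ℕ) : ℕ × ℕ → Bool := fun q => decide (q = (N - 1, 0))

/-- The size-`N` upward pattern filled exactly at the bottom-right corner `(N-1, 2(N-1))`. -/
def botrightUp (N : ℕ) : ℕ × ℕ → Bool := fun q => decide (q = (N - 1, 2 * (N - 1)))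

/-- The everywhere-unfilled downward pattern. -/
def blankDown : ℕ × ℕ → Bool := fun _ => false

/-- The size-`N` downward pattern filled exactly at the upward units along the top side:
positions `(0, m)` with `m` odd, `1 ≤ m ≤ 2N - 3`. -/
def topsideDown (N : ℕ) : ℕ × ℕ → Bool := fun q =>
  decide (q.1 = 0 ∧ q.2 % 2 = 1 ∧ 1 ≤ q.2 ∧ q.2 ≤ 2 * N - 3)

/-- The size-`N` downward pattern filled exactly at the upward units along the left side:
positions `(k, 1)` with `0 ≤ k ≤ N - 2`. -/
def leftsideDown (N : ℕ) : ℕ × ℕ → Bool := fun q =>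
  decide (q.2 = 1 ∧ q.1 ≤ N - 2)

/-- The size-`N` downward pattern filled exactly at the upward units along the right side:
positions `(k, 2(N-1-k) - 1)` with `0 ≤ k ≤ N - 2`. -/
def rightsideDown (N : ℕ) : ℕ × ℕ → Bool := fun q =>
  decide (q.1 ≤ N - 2 ∧ q.2 = 2 * (N - 1 - q.1) - 1)


def eN (R J : ℕ) : ℕ := Nat.choose R J % 2

lemma eN_lt (R J : ℕ) : eN R J < 2 := Nat.mod_lt _ (by norm_num)

lemma halfstep (R J : ℕ) : eN R J = eN (R % 2) (J % 2) * eN (R / 2) (J / 2) % 2 := by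
  have h := @Choose.choose_modEq_choose_mod_mul_choose_div_nat R J 2 ⟨Nat.prime_two⟩
  unfold Nat.ModEq at h
  unfold eN
  rw [h, Nat.mul_mod]

lemma eN00 : eN 0 0 = 1 := by simp [eN]
lemma eN10 : eN 1 0 = 1 := by simp [eN]
lemma eN11 : eN 1 1 = 1 := by simp [eN]
lemma eN01 : eN 0 1 = 0 := by simp [eN]

lemma h00 (a b : ℕ) : eN (2*a) (2*b) = eN a b := by
  rw [halfstep]
  rw [show (2*a) % 2 = 0 by omega, show (2*b) % 2 = 0 by omega,
    show (2*a)/2 = a by omega, show (2*b)/2 = b by omega, eN00]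
  have := eN_lt a b; omega

lemma h10 (a b : ℕ) : eN (2*a+1) (2*b) = eN a b := by
  rw [halfstep]
  rw [show (2*a+1) % 2 = 1 by omega, show (2*b) % 2 = 0 by omega,
    show (2*a+1)/2 = a by omega, show (2*b)/2 = b by omega, eN10]
  have := eN_lt a b; omega

lemma h11 (a b : ℕ) : eN (2*a+1) (2*b+1) = eN a b := by
  rw [halfstep]
  rw [show (2*a+1) % 2 = 1 by omega, show (2*b+1) % 2 = 1 by omega,
    show (2*a+1)/2 = a by omega, show (2*b+1)/2 = b by omega, eN11]
  have := eN_lt a b; omega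

lemma h01 (a b : ℕ) : eN (2*a) (2*b+1) = 0 := by
  rw [halfstep]
  rw [show (2*a) % 2 = 0 by omega, show (2*b+1) % 2 = 1 by omega, eN01]
  simp

/-- L1: filled cell in even row has even column -/
lemma L1 {X J : ℕ} (hX : X % 2 = 0) (h : eN X J = 1) : J % 2 = 0 := by
  by_contra hJ
  rw [show X = 2*(X/2) by omega, show J = 2*(J/2)+1 by omega, h01] at h
  omega

/-- even column: eN constant on row-pairs -/
lemma Lpair {X J : ℕ} (hX : X % 2 = 0) (hJ : J % 2 = 0) : eN (X+1) J = eN X J := by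
  rw [show X = 2*(X/2) by omega, show J = 2*(J/2) by omega]
  rw [show 2*(X/2)+1 = 2*(X/2)+1 from rfl, h10, h00]

/-- L2: descent implies odd row -/
lemma L2 {X J : ℕ} (h1 : eN X J = 1) (h2 : eN (X+1) J = 0) : X % 2 = 1 := by
  by_contra hX
  have hX0 : X % 2 = 0 := by omega
  have hJ := L1 hX0 h1
  rw [Lpair hX0 hJ] at h2
  omega

/-- L3: odd row filled cell: column parity from cell above -/
lemma L3 {X J : ℕ} (hX : X % 2 = 1) (h : eN X J = 1) : eN (X-1) J = 1 - J % 2 := by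
  rcases Nat.even_or_odd J with hJ | hJ
  · have hJ0 : J % 2 = 0 := Nat.even_iff.mp hJ
    have : eN (X-1) J = eN X J := by
      have := Lpair (X := X-1) (J := J) (by omega) hJ0
      rw [show X - 1 + 1 = X by omega] at this
      omega
    omega
  · have hJ1 : J % 2 = 1 := Nat.odd_iff.mp hJ
    have : eN (X-1) J = 0 := by
      rw [show X - 1 = 2*((X-1)/2) by omega, show J = 2*(J/2)+1 by omega, h01]
    omega

/-- L4: strict interior ascent implies even row -/
lemma L4 {X J : ℕ} (h0 : eN (X-1) J = 0) (h1 : eN X J = 1) (h2 : eN (X+1) J = 1) :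
    X % 2 = 0 := by
  by_contra hX
  have hX1 : X % 2 = 1 := by omega
  rcases Nat.even_or_odd J with hJ | hJ
  · have hJ0 : J % 2 = 0 := Nat.even_iff.mp hJ
    have := Lpair (X := X-1) (J := J) (by omega) hJ0
    rw [show X - 1 + 1 = X by omega] at this
    omega
  · have hJ1 : J % 2 = 1 := Nat.odd_iff.mp hJ
    have : J % 2 = 0 := L1 (by omega) h2
    omega

/-- L5: adjacent filled implies even column -/
lemma L5 {X J : ℕ} (h1 : eN X J = 1) (h2 : eN (X+1) J = 1) : J % 2 = 0 := by
  rcases Nat.even_or_odd X with hX | hX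
  · exact L1 (Nat.even_iff.mp hX) h1
  · exact L1 (by have := Nat.odd_iff.mp hX; omega) h2

/-- choose symmetry for eN -/
lemma eN_symm {X J : ℕ} (h : J ≤ X) : eN X (X - J) = eN X J := by
  unfold eN
  rw [Nat.choose_symm h]

/-- L6 -/
lemma L6 {r J : ℕ} (hr : r % 2 = 0) (hJ : J % 2 = 0) (hJr : J ≤ r)
    (h : eN (r+1) J = 1) : eN (r+1) (r - J) = 1 := by
  have h1 : eN r J = 1 := by rw [← Lpair hr hJ]; exact h
  have h2 : eN r (r - J) = 1 := by rw [eN_symm hJr]; exact h1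
  rw [Lpair hr (by omega)]
  exact h2

/-- L7: top-filled with empty above (in-window): column parity = row parity -/
lemma L7 {X J : ℕ} (h1 : eN X J = 1) (h0 : eN (X-1) J = 0) (hX : 1 ≤ X) :
    J % 2 = X % 2 := by
  rcases Nat.even_or_odd X with hX2 | hX2
  · have := L1 (Nat.even_iff.mp hX2) h1
    have := Nat.even_iff.mp hX2
    omega
  · have hX1 : X % 2 = 1 := Nat.odd_iff.mp hX2
    by_contra hJ
    have hJ0 : J % 2 = 0 := by omega
    have := Lpair (X := X-1) (J := J) (by omega) hJ0
    rw [show X - 1 + 1 = X by omega] at this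
    omega

lemma eN_zero_of_lt {X J : ℕ} (h : X < J) : eN X J = 0 := by
  unfold eN
  rw [Nat.choose_eq_zero_of_lt h]

lemma eN_self (X : ℕ) : eN X X = 1 := by
  unfold eN
  rw [Nat.choose_self]
/-- scale invariance: adding 2^t to the row -/
lemma Lpow : ∀ t x y : ℕ, x < 2^t → y < 2^t → eN (2^t + x) y = eN x y := by
  intro t
  induction t with
  | zero =>
    intro x y hx hy
    interval_cases x <;> interval_cases y
    norm_num
    rw [eN10, eN00]
  | succ t ih =>
    intro x y hx hy
    have hx2 : x / 2 < 2^t := by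
      have : 2^(t+1) = 2*2^t := by ring
      omega
    have hy2 : y / 2 < 2^t := by
      have : 2^(t+1) = 2*2^t := by ring
      omega
    have e1 : (2^(t+1) + x) % 2 = x % 2 := by
      have : 2^(t+1) = 2*2^t := by ring
      omega
    have e2 : (2^(t+1) + x) / 2 = 2^t + x / 2 := by
      have : 2^(t+1) = 2*2^t := by ring
      omega
    rw [halfstep (2^(t+1)+x) y, e1, e2, ih _ _ hx2 hy2, ← halfstep]

/-- row 2^t - 1 is all ones -/
lemma Lones : ∀ t y : ℕ, y < 2^t → eN (2^t - 1) y = 1 := by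
  intro t
  induction t with
  | zero => intro y hy; interval_cases y; simpa using eN00
  | succ t ih =>
    intro y hy
    have e1 : (2^(t+1) - 1) % 2 = 1 := by
      have : 2^(t+1) = 2*2^t := by ring
      have : 2^t ≥ 1 := Nat.one_le_two_pow
      omega
    have e2 : (2^(t+1) - 1) / 2 = 2^t - 1 := by
      have : 2^(t+1) = 2*2^t := by ring
      have : 2^t ≥ 1 := Nat.one_le_two_pow
      omega
    have hy2 : y / 2 < 2^t := by
      have : 2^(t+1) = 2*2^t := by ring
      omega
    rw [halfstep, e1, e2, ih _ hy2]
    rcases Nat.even_or_odd y with h | h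
    · rw [Nat.even_iff.mp h, eN10]
    · rw [Nat.odd_iff.mp h, eN11]

lemma filled_even (R j : ℕ) : filled R (2*j) = decide (eN R j = 1) := by
  simp only [filled, eN, Nat.mul_mod_right, Nat.mul_div_cancel_left _ (by norm_num : 0 < 2)]
  simp
  congr

lemma filled_odd_col (R c : ℕ) (h : c % 2 = 1) : filled R c = false := by
  simp only [filled, decide_eq_false_iff_not]
  intro hc
  omega

lemma pascal_eN (X J : ℕ) : eN (X+1) (J+1) = (eN X J + eN X (J+1)) % 2 := by
  unfold eN
  rw [Nat.choose_succ_succ, Nat.add_mod]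

lemma cells_eq {n r j r' j' : ℕ}
    (H : ∀ k, 1 ≤ k → k < n → eN (r+k) j = eN (r'+k) j' ∧ eN (r+k) (j+k) = eN (r'+k) (j'+k)) :
    ∀ k, 1 ≤ k → k < n → ∀ i, i ≤ k → eN (r+k) (j+i) = eN (r'+k) (j'+i) := by
  intro k
  induction k with
  | zero => omega
  | succ k ih =>
    intro hk1 hkn i hi
    rcases Nat.eq_zero_or_pos i with rfl | hi0
    · simpa using (H (k+1) hk1 hkn).1
    rcases eq_or_lt_of_le hi with rfl | hik
    · exact (H (k+1) hk1 hkn).2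
    · have hk : 1 ≤ k := by omega
      have e1 := ih hk (by omega) (i-1) (by omega)
      have e2 := ih hk (by omega) i (by omega)
      have p1 : eN (r+(k+1)) (j+i) = (eN (r+k) (j+(i-1)) + eN (r+k) (j+i)) % 2 := by
        have hp := pascal_eN (r+k) (j+(i-1))
        rw [show (j+(i-1))+1 = j+i by omega] at hp
        rw [show r+(k+1) = (r+k)+1 by omega, hp]
      have p2 : eN (r'+(k+1)) (j'+i) = (eN (r'+k) (j'+(i-1)) + eN (r'+k) (j'+i)) % 2 := by
        have hp := pascal_eN (r'+k) (j'+(i-1))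
        rw [show (j'+(i-1))+1 = j'+i by omega] at hp
        rw [show r'+(k+1) = (r'+k)+1 by omega, hp]
      rw [p1, p2, e1, e2]

lemma topcut_eq_iff {n r j r' j' : ℕ} :
    topCutPattern n r (2*j) = topCutPattern n r' (2*j') ↔
    ∀ k, 1 ≤ k → k < n → eN (r+k) j = eN (r'+k) j' ∧ eN (r+k) (j+k) = eN (r'+k) (j'+k) := by
  constructor
  · intro h k hk1 hkn
    constructor
    · have hc := congrFun h (k, 0)
      simp only [topCutPattern] at hc
      rw [if_pos ⟨hk1, hkn, by omega⟩, if_pos ⟨hk1, hkn, by omega⟩] at hc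
      rw [show 2*j+0 = 2*j by omega, show 2*j'+0 = 2*j' by omega,
        filled_even, filled_even] at hc
      have h1 := eN_lt (r+k) j
      have h2 := eN_lt (r'+k) j'
      have := decide_eq_decide.mp hc
      omega
    · have hc := congrFun h (k, 2*k)
      simp only [topCutPattern] at hc
      rw [if_pos ⟨hk1, hkn, by omega⟩, if_pos ⟨hk1, hkn, by omega⟩] at hc
      rw [show 2*j+2*k = 2*(j+k) by ring, show 2*j'+2*k = 2*(j'+k) by ring,
        filled_even, filled_even] at hc
      have h1 := eN_lt (r+k) (j+k)
      have h2 := eN_lt (r'+k) (j'+k)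
      have := decide_eq_decide.mp hc
      omega
  · intro H
    funext q
    obtain ⟨k, m⟩ := q
    simp only [topCutPattern]
    by_cases hc : 1 ≤ k ∧ k < n ∧ m ≤ 2*k
    · rw [if_pos hc, if_pos hc]
      rcases Nat.even_or_odd m with hm | hm
      · obtain ⟨i, rfl⟩ := hm
        rw [show 2*j + (i+i) = 2*(j+i) by ring, show 2*j' + (i+i) = 2*(j'+i) by ring,
          filled_even, filled_even, cells_eq H k hc.1 hc.2.1 i (by omega)]
      · have hm1 : m % 2 = 1 := Nat.odd_iff.mp hm
        rw [filled_odd_col _ _ (by omega), filled_odd_col _ _ (by omega)]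
    · rw [if_neg hc, if_neg hc]

lemma s1_11 {r m : ℕ} (hm : m ≤ r) (a1 : eN (r+1) m = 1) (a2 : eN (r+2) m = 1)
    (b1 : eN (r+1) (r-m) = 1) (b2 : eN (r+2) (r-m) = 1) : r % 2 = 0 := by
  have h1 : m % 2 = 0 := L5 a1 (by rw [show r+1+1 = r+2 by omega]; exact a2)
  have h2 : (r-m) % 2 = 0 := L5 b1 (by rw [show r+1+1 = r+2 by omega]; exact b2)
  omega

lemma s1_10 {r m : ℕ} (hm : m ≤ r) (a1 : eN (r+1) m = 1) (a2 : eN (r+2) m = 1)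
    (b1 : eN (r+1) (r-m) = 0) : r % 2 = 1 := by
  have h1 : m % 2 = 0 := L5 a1 (by rw [show r+1+1 = r+2 by omega]; exact a2)
  by_contra h
  have := L6 (by omega) h1 hm a1
  omega

lemma s1_dd {r m ν : ℕ} (hm : m ≤ r) (hν : 1 ≤ ν)
    (a1 : eN (r+ν) m = 1) (a0 : eN (r+(ν-1)) m = 0)
    (b1 : eN (r+ν) (r-m) = 1) (b0 : eN (r+(ν-1)) (r-m) = 0) :
    r % 2 = 0 ∧ m % 2 = ν % 2 := by
  have h1 : m % 2 = (r+ν) % 2 :=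
    L7 a1 (by rw [show r+ν-1 = r+(ν-1) by omega]; exact a0) (by omega)
  have h2 : (r-m) % 2 = (r+ν) % 2 :=
    L7 b1 (by rw [show r+ν-1 = r+(ν-1) by omega]; exact b0) (by omega)
  omega

set_option maxHeartbeats 1000000 in
theorem det {n r j r' j' : ℕ} (hn : 2 ≤ n) (hj : j ≤ r) (hj' : j' ≤ r')
    (HA : ∀ k, 1 ≤ k → k < n → eN (r+k) j = eN (r'+k) j')
    (HB : ∀ k, 1 ≤ k → k < n → eN (r+k) (r-j) = eN (r'+k) (r'-j'))
    (hC1 : ¬ (∀ k, 1 ≤ k → k < n → eN (r+k) j = 0 ∧ eN (r+k) (r-j) = 0))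
    (hC2 : ¬ (eN (r+1) j = 1 ∧ eN (r+1) (r-j) = 1 ∧
        ∀ k, 2 ≤ k → k < n → eN (r+k) j = 0 ∧ eN (r+k) (r-j) = 0))
    (hC3 : ¬ (eN (r+(n-1)) j = 1 ∧ (∀ k, 1 ≤ k → k < n-1 → eN (r+k) j = 0) ∧
        (∀ k, 1 ≤ k → k < n → eN (r+k) (r-j) = 0)))
    (hC4 : ¬ (eN (r+(n-1)) (r-j) = 1 ∧ (∀ k, 1 ≤ k → k < n-1 → eN (r+k) (r-j) = 0) ∧
        (∀ k, 1 ≤ k → k < n → eN (r+k) j = 0))) :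
    r % 2 = r' % 2 ∧ j % 2 = j' % 2 := by
  have hjD : r - (r - j) = j := by omega
  have hjD' : r' - (r' - j') = j' := by omega
  have hsum : (r - j) + j = r := by omega
  have hsum' : (r' - j') + j' = r' := by omega
  -- n = 2 : every shape is special, contradiction
  rcases eq_or_lt_of_le hn with h2 | hn3
  · exfalso
    have e1 := eN_lt (r+1) j
    have e2 := eN_lt (r+1) (r-j)
    have hone : (1:ℕ) < n := by omega
    rcases (by omega : eN (r+1) j = 0 ∨ eN (r+1) j = 1) with hA | hA <;>
      rcases (by omega : eN (r+1) (r-j) = 0 ∨ eN (r+1) (r-j) = 1) with hB | hB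
    · refine hC1 (fun k hk1 hkn => ?_)
      have hk : k = 1 := by omega
      subst hk
      exact ⟨hA, hB⟩
    · refine hC4 ⟨by rw [show n-1 = 1 by omega]; exact hB, fun k hk1 hkn => by omega,
        fun k hk1 hkn => ?_⟩
      have hk : k = 1 := by omega
      subst hk
      exact hA
    · refine hC3 ⟨by rw [show n-1 = 1 by omega]; exact hA, fun k hk1 hkn => by omega,
        fun k hk1 hkn => ?_⟩
      have hk : k = 1 := by omega
      subst hk
      exact hB
    · exact hC2 ⟨hA, hB, fun k hk1 hkn => by omega⟩
  -- now 3 ≤ n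
  have hr : r % 2 = r' % 2 := by
    by_cases hdesc : ∃ k, 1 ≤ k ∧ k + 1 < n ∧
        ((eN (r+k) j = 1 ∧ eN (r+(k+1)) j = 0) ∨
         (eN (r+k) (r-j) = 1 ∧ eN (r+(k+1)) (r-j) = 0))
    · obtain ⟨k, hk1, hkn, hd⟩ := hdesc
      have o1 : (r+k) % 2 = 1 := by
        rcases hd with ⟨h1, h0⟩ | ⟨h1, h0⟩
        · exact L2 h1 (by rw [show r+k+1 = r+(k+1) by omega]; exact h0)
        · exact L2 h1 (by rw [show r+k+1 = r+(k+1) by omega]; exact h0)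
      have o2 : (r'+k) % 2 = 1 := by
        rcases hd with ⟨h1, h0⟩ | ⟨h1, h0⟩
        · refine L2 (J := j') ?_ ?_
          · rw [← HA k hk1 (by omega)]; exact h1
          · rw [show r'+k+1 = r'+(k+1) by omega, ← HA (k+1) (by omega) (by omega)]; exact h0
        · refine L2 (J := r'-j') ?_ ?_
          · rw [← HB k hk1 (by omega)]; exact h1
          · rw [show r'+k+1 = r'+(k+1) by omega, ← HB (k+1) (by omega) (by omega)]; exact h0
      omega
    · have nodescA : ∀ k, 1 ≤ k → k+1 < n → eN (r+k) j = 1 → eN (r+(k+1)) j = 1 := by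
        intro k hk hkn h1
        have := eN_lt (r+(k+1)) j
        by_contra h
        exact hdesc ⟨k, hk, hkn, Or.inl ⟨h1, by omega⟩⟩
      have nodescB : ∀ k, 1 ≤ k → k+1 < n → eN (r+k) (r-j) = 1 → eN (r+(k+1)) (r-j) = 1 := by
        intro k hk hkn h1
        have := eN_lt (r+(k+1)) (r-j)
        by_contra h
        exact hdesc ⟨k, hk, hkn, Or.inr ⟨h1, by omega⟩⟩
      by_cases hasc : ∃ k, 2 ≤ k ∧ k + 1 < n ∧
          ((eN (r+(k-1)) j = 0 ∧ eN (r+k) j = 1) ∨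
           (eN (r+(k-1)) (r-j) = 0 ∧ eN (r+k) (r-j) = 1))
      · obtain ⟨k, hk2, hkn, ha⟩ := hasc
        have o1 : (r+k) % 2 = 0 := by
          rcases ha with ⟨h0, h1⟩ | ⟨h0, h1⟩
          · exact L4 (by rw [show r+k-1 = r+(k-1) by omega]; exact h0) h1
              (by rw [show r+k+1 = r+(k+1) by omega]; exact nodescA k (by omega) hkn h1)
          · exact L4 (by rw [show r+k-1 = r+(k-1) by omega]; exact h0) h1
              (by rw [show r+k+1 = r+(k+1) by omega]; exact nodescB k (by omega) hkn h1)
        have o2 : (r'+k) % 2 = 0 := by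
          rcases ha with ⟨h0, h1⟩ | ⟨h0, h1⟩
          · refine L4 (J := j') ?_ ?_ ?_
            · rw [show r'+k-1 = r'+(k-1) by omega, ← HA (k-1) (by omega) (by omega)]; exact h0
            · rw [← HA k (by omega) (by omega)]; exact h1
            · rw [show r'+k+1 = r'+(k+1) by omega, ← HA (k+1) (by omega) (by omega)]
              exact nodescA k (by omega) hkn h1
          · refine L4 (J := r'-j') ?_ ?_ ?_
            · rw [show r'+k-1 = r'+(k-1) by omega, ← HB (k-1) (by omega) (by omega)]; exact h0
            · rw [← HB k (by omega) (by omega)]; exact h1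
            · rw [show r'+k+1 = r'+(k+1) by omega, ← HB (k+1) (by omega) (by omega)]
              exact nodescB k (by omega) hkn h1
        omega
      · -- constants on [1, n-2], i.e. k < n-1
        have hconstA : ∀ k, 1 ≤ k → k < n-1 → eN (r+k) j = eN (r+1) j := by
          intro k
          induction k with
          | zero => omega
          | succ k ih =>
            intro _ hkn
            rcases Nat.eq_zero_or_pos k with rfl | hk0
            · rfl
            have hprev := ih (by omega) (by omega)
            have e1 := eN_lt (r+k) j
            have e2 := eN_lt (r+(k+1)) j
            rcases (by omega : eN (r+k) j = 0 ∨ eN (r+k) j = 1) with h0 | h1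
            · rcases (by omega : eN (r+(k+1)) j = 0 ∨ eN (r+(k+1)) j = 1) with g0 | g1
              · omega
              · exfalso
                exact hasc ⟨k+1, by omega, by omega,
                  Or.inl ⟨by rw [show k+1-1 = k by omega]; exact h0, g1⟩⟩
            · have := nodescA k (by omega) (by omega) h1
              omega
        have hconstB : ∀ k, 1 ≤ k → k < n-1 → eN (r+k) (r-j) = eN (r+1) (r-j) := by
          intro k
          induction k with
          | zero => omega
          | succ k ih =>
            intro _ hkn
            rcases Nat.eq_zero_or_pos k with rfl | hk0
            · rfl
            have hprev := ih (by omega) (by omega)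
            have e1 := eN_lt (r+k) (r-j)
            have e2 := eN_lt (r+(k+1)) (r-j)
            rcases (by omega : eN (r+k) (r-j) = 0 ∨ eN (r+k) (r-j) = 1) with h0 | h1
            · rcases (by omega : eN (r+(k+1)) (r-j) = 0 ∨ eN (r+(k+1)) (r-j) = 1) with g0 | g1
              · omega
              · exfalso
                exact hasc ⟨k+1, by omega, by omega,
                  Or.inr ⟨by rw [show k+1-1 = k by omega]; exact h0, g1⟩⟩
            · have := nodescB k (by omega) (by omega) h1
              omega
        have eA1 := eN_lt (r+1) j
        have eB1 := eN_lt (r+1) (r-j)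
        rcases (by omega : eN (r+1) j = 0 ∨ eN (r+1) j = 1) with hA1 | hA1 <;>
          rcases (by omega : eN (r+1) (r-j) = 0 ∨ eN (r+1) (r-j) = 1) with hB1 | hB1
        · -- both zero on [1, n-2]; case on values at ν = n-1
          have eAν := eN_lt (r+(n-1)) j
          have eBν := eN_lt (r+(n-1)) (r-j)
          have hA0 : ∀ k, 1 ≤ k → k < n-1 → eN (r+k) j = 0 := by
            intro k hk hkn; rw [hconstA k hk hkn]; exact hA1
          have hB0 : ∀ k, 1 ≤ k → k < n-1 → eN (r+k) (r-j) = 0 := by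
            intro k hk hkn; rw [hconstB k hk hkn]; exact hB1
          rcases (by omega : eN (r+(n-1)) j = 0 ∨ eN (r+(n-1)) j = 1) with hAν | hAν <;>
            rcases (by omega : eN (r+(n-1)) (r-j) = 0 ∨ eN (r+(n-1)) (r-j) = 1) with hBν | hBν
          · exfalso
            refine hC1 (fun k hk hkn => ?_)
            rcases (by omega : k < n-1 ∨ k = n-1) with h | h
            · exact ⟨hA0 k hk h, hB0 k hk h⟩
            · subst h; exact ⟨hAν, hBν⟩
          · exfalso
            refine hC4 ⟨hBν, hB0, fun k hk hkn => ?_⟩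
            rcases (by omega : k < n-1 ∨ k = n-1) with h | h
            · exact hA0 k hk h
            · subst h; exact hAν
          · exfalso
            refine hC3 ⟨hAν, hA0, fun k hk hkn => ?_⟩
            rcases (by omega : k < n-1 ∨ k = n-1) with h | h
            · exact hB0 k hk h
            · subst h; exact hBν
          · -- A = B = δν : r even on both sides
            have o1 := (s1_dd hj (by omega) hAν
              (hA0 (n-1-1) (by omega) (by omega)) hBν
              (hB0 (n-1-1) (by omega) (by omega))).1
            have o2 : r' % 2 = 0 := by
              refine (s1_dd hj' (ν := n-1) (by omega) ?_ ?_ ?_ ?_).1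
              · rw [← HA (n-1) (by omega) (by omega)]; exact hAν
              · rw [← HA (n-1-1) (by omega) (by omega)]
                exact hA0 (n-1-1) (by omega) (by omega)
              · rw [← HB (n-1) (by omega) (by omega)]; exact hBν
              · rw [← HB (n-1-1) (by omega) (by omega)]
                exact hB0 (n-1-1) (by omega) (by omega)
            omega
        · -- A1 = 0, B1 = 1 : use s1_10 with m = r - j
          have hB2 := nodescB 1 (by omega) (by omega) hB1
          have o1 : r % 2 = 1 := by
            refine s1_10 (m := r-j) (by omega) hB1
              (by rw [show r+2 = r+(1+1) by omega]; exact hB2) ?_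
            rw [hjD]; exact hA1
          have o2 : r' % 2 = 1 := by
            refine s1_10 (m := r'-j') (by omega) ?_ ?_ ?_
            · rw [← HB 1 (by omega) (by omega)]; exact hB1
            · rw [show r'+2 = r'+(1+1) by omega, ← HB 2 (by omega) (by omega)]
              rw [show r+(1+1) = r+2 by omega] at hB2
              rw [show r+2 = r+(1+1) by omega] at hB2
              exact hB2
            · rw [hjD', ← HA 1 (by omega) (by omega)]; exact hA1
          omega
        · -- A1 = 1, B1 = 0
          have hA2 := nodescA 1 (by omega) (by omega) hA1
          have o1 : r % 2 = 1 :=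
            s1_10 hj hA1 (by rw [show r+2 = r+(1+1) by omega]; exact hA2) hB1
          have o2 : r' % 2 = 1 := by
            refine s1_10 hj' ?_ ?_ ?_
            · rw [← HA 1 (by omega) (by omega)]; exact hA1
            · rw [show r'+2 = r'+(1+1) by omega, ← HA 2 (by omega) (by omega)]; exact hA2
            · rw [← HB 1 (by omega) (by omega)]; exact hB1
          omega
        · -- A1 = 1, B1 = 1
          have hA2 := nodescA 1 (by omega) (by omega) hA1
          have hB2 := nodescB 1 (by omega) (by omega) hB1
          have o1 : r % 2 = 0 :=
            s1_11 hj hA1 (by rw [show r+2 = r+(1+1) by omega]; exact hA2)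
              hB1 (by rw [show r+2 = r+(1+1) by omega]; exact hB2)
          have o2 : r' % 2 = 0 := by
            refine s1_11 hj' ?_ ?_ ?_ ?_
            · rw [← HA 1 (by omega) (by omega)]; exact hA1
            · rw [show r'+2 = r'+(1+1) by omega, ← HA 2 (by omega) (by omega)]; exact hA2
            · rw [← HB 1 (by omega) (by omega)]; exact hB1
            · rw [show r'+2 = r'+(1+1) by omega, ← HB 2 (by omega) (by omega)]; exact hB2
          omega
  refine ⟨hr, ?_⟩
  -- Stage 2
  by_cases hA0 : ∃ k, 1 ≤ k ∧ k < n ∧ eN (r+k) j = 1 ∧ (r+k) % 2 = 0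
  · obtain ⟨k, hk1, hkn, h1, hp⟩ := hA0
    have o1 : j % 2 = 0 := L1 hp h1
    have o2 : j' % 2 = 0 := L1 (X := r'+k) (by omega) (by rw [← HA k hk1 hkn]; exact h1)
    omega
  by_cases hA1 : ∃ k, 2 ≤ k ∧ k < n ∧ eN (r+k) j = 1 ∧ (r+k) % 2 = 1
  · obtain ⟨k, hk2, hkn, h1, hp⟩ := hA1
    have o1 := L3 hp h1
    have o2 := L3 (X := r'+k) (J := j') (by omega) (by rw [← HA k (by omega) hkn]; exact h1)
    rw [show r+k-1 = r+(k-1) by omega] at o1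
    rw [show r'+k-1 = r'+(k-1) by omega, ← HA (k-1) (by omega) (by omega)] at o2
    have := eN_lt (r+(k-1)) j
    omega
  by_cases hB0 : ∃ k, 1 ≤ k ∧ k < n ∧ eN (r+k) (r-j) = 1 ∧ (r+k) % 2 = 0
  · obtain ⟨k, hk1, hkn, h1, hp⟩ := hB0
    have o1 : (r-j) % 2 = 0 := L1 hp h1
    have o2 : (r'-j') % 2 = 0 := L1 (X := r'+k) (by omega) (by rw [← HB k hk1 hkn]; exact h1)
    omega
  by_cases hB1 : ∃ k, 2 ≤ k ∧ k < n ∧ eN (r+k) (r-j) = 1 ∧ (r+k) % 2 = 1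
  · obtain ⟨k, hk2, hkn, h1, hp⟩ := hB1
    have o1 := L3 hp h1
    have o2 := L3 (X := r'+k) (J := r'-j') (by omega) (by rw [← HB k (by omega) hkn]; exact h1)
    rw [show r+k-1 = r+(k-1) by omega] at o1
    rw [show r'+k-1 = r'+(k-1) by omega, ← HB (k-1) (by omega) (by omega)] at o2
    have := eN_lt (r+(k-1)) (r-j)
    omega
  -- residual analysis
  have resA : ∀ k, 1 ≤ k → k < n → eN (r+k) j = 1 → k = 1 ∧ (r+1) % 2 = 1 := by
    intro k hk hkn h1
    rcases (by omega : (r+k) % 2 = 0 ∨ (r+k) % 2 = 1) with hp | hp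
    · exact absurd ⟨k, hk, hkn, h1, hp⟩ hA0
    · rcases (by omega : k = 1 ∨ 2 ≤ k) with h | h
      · subst h; exact ⟨rfl, hp⟩
      · exact absurd ⟨k, h, hkn, h1, hp⟩ hA1
  have resB : ∀ k, 1 ≤ k → k < n → eN (r+k) (r-j) = 1 → k = 1 ∧ (r+1) % 2 = 1 := by
    intro k hk hkn h1
    rcases (by omega : (r+k) % 2 = 0 ∨ (r+k) % 2 = 1) with hp | hp
    · exact absurd ⟨k, hk, hkn, h1, hp⟩ hB0
    · rcases (by omega : k = 1 ∨ 2 ≤ k) with h | h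
      · subst h; exact ⟨rfl, hp⟩
      · exact absurd ⟨k, h, hkn, h1, hp⟩ hB1
  have eA1 := eN_lt (r+1) j
  have eB1 := eN_lt (r+1) (r-j)
  rcases (by omega : eN (r+1) j = 0 ∨ eN (r+1) j = 1) with hA1v | hA1v <;>
    rcases (by omega : eN (r+1) (r-j) = 0 ∨ eN (r+1) (r-j) = 1) with hB1v | hB1v
  · exfalso
    refine hC1 (fun k hk hkn => ?_)
    have e1 := eN_lt (r+k) j
    have e2 := eN_lt (r+k) (r-j)
    constructor
    · rcases (by omega : eN (r+k) j = 0 ∨ eN (r+k) j = 1) with h | h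
      · exact h
      · exfalso
        have hk1' := (resA k hk hkn h).1
        subst hk1'
        omega
    · rcases (by omega : eN (r+k) (r-j) = 0 ∨ eN (r+k) (r-j) = 1) with h | h
      · exact h
      · exfalso
        have hk1' := (resB k hk hkn h).1
        subst hk1'
        omega
  · -- A1 = 0, B1 = 1  : D odd, r even, j odd
    have hrp := (resB 1 (by omega) (by omega) hB1v).2
    have hr0 : r % 2 = 0 := by omega
    have o1 : (r-j) % 2 = 1 := by
      rcases (by omega : (r-j) % 2 = 0 ∨ (r-j) % 2 = 1) with h | h
      · exfalso
        have := L6 hr0 h (by omega) hB1v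
        rw [hjD] at this
        omega
      · exact h
    have o2 : (r'-j') % 2 = 1 := by
      have hB1v' : eN (r'+1) (r'-j') = 1 := by rw [← HB 1 (by omega) (by omega)]; exact hB1v
      have hA1v' : eN (r'+1) j' = 0 := by rw [← HA 1 (by omega) (by omega)]; exact hA1v
      rcases (by omega : (r'-j') % 2 = 0 ∨ (r'-j') % 2 = 1) with h | h
      · exfalso
        have := L6 (r := r') (by omega) h (by omega) hB1v'
        rw [hjD'] at this
        omega
      · exact h
    omega
  · -- A1 = 1, B1 = 0 : j odd
    have hrp := (resA 1 (by omega) (by omega) hA1v).2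
    have hr0 : r % 2 = 0 := by omega
    have o1 : j % 2 = 1 := by
      rcases (by omega : j % 2 = 0 ∨ j % 2 = 1) with h | h
      · exfalso
        have := L6 hr0 h hj hA1v
        omega
      · exact h
    have o2 : j' % 2 = 1 := by
      have hA1v' : eN (r'+1) j' = 1 := by rw [← HA 1 (by omega) (by omega)]; exact hA1v
      have hB1v' : eN (r'+1) (r'-j') = 0 := by rw [← HB 1 (by omega) (by omega)]; exact hB1v
      rcases (by omega : j' % 2 = 0 ∨ j' % 2 = 1) with h | h
      · exfalso
        have := L6 (r := r') (by omega) h hj' hA1v'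
        omega
      · exact h
    omega
  · -- A1 = 1, B1 = 1 : C2
    exfalso
    refine hC2 ⟨hA1v, hB1v, fun k hk hkn => ?_⟩
    have e1 := eN_lt (r+k) j
    have e2 := eN_lt (r+k) (r-j)
    constructor
    · rcases (by omega : eN (r+k) j = 0 ∨ eN (r+k) j = 1) with h | h
      · exact h
      · have := (resA k (by omega) hkn h).1; omega
    · rcases (by omega : eN (r+k) (r-j) = 0 ∨ eN (r+k) (r-j) = 1) with h | h
      · exact h
      · have := (resB k (by omega) hkn h).1; omega

lemma pow_facts (n : ℕ) : n < 2^n ∧ 2^(n+3) = 8*2^n ∧ 2^(n+4) = 16*2^n := by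
  refine ⟨Nat.lt_two_pow_self, ?_, ?_⟩ <;> ring

lemma eN_small_delta {m ν : ℕ} (hm : m ≤ ν) : eN m ν = (if m = ν then 1 else 0) := by
  rcases eq_or_lt_of_le hm with h | h
  · rw [if_pos h, h, eN_self]
  · rw [if_neg (by omega), eN_zero_of_lt h]

lemma blank_seq {n x ε k : ℕ} (hn : 2 ≤ n) (hx : 2 ≤ x) (hx2 : x ≤ 2*n+1) (hε : ε ≤ 1)
    (hk : 1 ≤ k) (hkn : k < n) :
    eN ((2^(n+4) + x) + k) (2^(n+3) + ε) = 0 ∧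
    eN ((2^(n+4) + x) + k) ((2^(n+4) + x) - (2^(n+3) + ε)) = 0 := by
  obtain ⟨hP, e3, e4⟩ := pow_facts n
  constructor
  · rw [show (2^(n+4) + x) + k = 2^(n+4) + (x+k) by omega,
      Lpow (n+4) (x+k) _ (by omega) (by omega)]
    exact eN_zero_of_lt (by omega)
  · rw [show (2^(n+4) + x) + k = 2^(n+4) + (x+k) by omega,
      show (2^(n+4) + x) - (2^(n+3) + ε) = 2^(n+3) + (x - ε) by omega,
      Lpow (n+4) (x+k) _ (by omega) (by omega)]
    exact eN_zero_of_lt (by omega)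

lemma P1_seq {n ε k : ℕ} (hn : 2 ≤ n) (hε : ε ≤ 1) (hk : 1 ≤ k) (hkn : k < n) :
    eN ((2^(n+4) - 2) + k) (2^(n+3) + ε) = (if k = 1 then 1 else 0) ∧
    eN ((2^(n+4) - 2) + k) ((2^(n+4) - 2) - (2^(n+3) + ε)) = (if k = 1 then 1 else 0) := by
  obtain ⟨hP, e3, e4⟩ := pow_facts n
  have hP4 : 4 ≤ 2^n := by
    calc 4 = 2^2 := by norm_num
    _ ≤ 2^n := Nat.pow_le_pow_right (by norm_num) hn
  rcases (by omega : k = 1 ∨ 2 ≤ k) with rfl | h2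
  · rw [if_pos rfl]
    constructor
    · rw [show (2^(n+4) - 2) + 1 = 2^(n+4) - 1 by omega]
      exact Lones (n+4) _ (by omega)
    · rw [show (2^(n+4) - 2) + 1 = 2^(n+4) - 1 by omega]
      exact Lones (n+4) _ (by omega)
  · rw [if_neg (by omega)]
    constructor
    · rw [show (2^(n+4) - 2) + k = 2^(n+4) + (k-2) by omega,
        Lpow (n+4) (k-2) _ (by omega) (by omega)]
      exact eN_zero_of_lt (by omega)
    · rw [show (2^(n+4) - 2) + k = 2^(n+4) + (k-2) by omega,
        show (2^(n+4) - 2) - (2^(n+3) + ε) = 2^(n+3) - (2 + ε) by omega,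
        Lpow (n+4) (k-2) _ (by omega) (by omega)]
      exact eN_zero_of_lt (by omega)

lemma bl1_seq {n k : ℕ} (hn : 2 ≤ n) (hk : 1 ≤ k) (hkn : k < n) :
    eN (2^(n+4) + k) (n-1) = (if k = n-1 then 1 else 0) ∧
    eN (2^(n+4) + k) (2^(n+4) - (n-1)) = 0 := by
  obtain ⟨hP, e3, e4⟩ := pow_facts n
  constructor
  · rw [Lpow (n+4) k _ (by omega) (by omega)]
    exact eN_small_delta (by omega)
  · rw [Lpow (n+4) k _ (by omega) (by omega)]
    exact eN_zero_of_lt (by omega)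

lemma bl2_seq {n k : ℕ} (hn : 2 ≤ n) (hk : 1 ≤ k) (hkn : k < n) :
    eN ((2^(n+4) - 1) + k) (n-2) = (if k = n-1 then 1 else 0) ∧
    eN ((2^(n+4) - 1) + k) ((2^(n+4) - 1) - (n-2)) = 0 := by
  obtain ⟨hP, e3, e4⟩ := pow_facts n
  constructor
  · rw [show (2^(n+4) - 1) + k = 2^(n+4) + (k-1) by omega,
      Lpow (n+4) (k-1) _ (by omega) (by omega)]
    have := eN_small_delta (m := k-1) (ν := n-2) (by omega)
    rw [this]
    by_cases h : k = n-1
    · rw [if_pos (by omega), if_pos h]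
    · rw [if_neg (by omega), if_neg h]
  · rw [show (2^(n+4) - 1) + k = 2^(n+4) + (k-1) by omega,
      show (2^(n+4) - 1) - (n-2) = 2^(n+4) - (n-1) by omega,
      Lpow (n+4) (k-1) _ (by omega) (by omega)]
    exact eN_zero_of_lt (by omega)

lemma br1_seq {n k : ℕ} (hn : 2 ≤ n) (hk : 1 ≤ k) (hkn : k < n) :
    eN (2^(n+4) + k) (2^(n+4) - (n-1)) = 0 ∧
    eN (2^(n+4) + k) (2^(n+4) - (2^(n+4) - (n-1))) = (if k = n-1 then 1 else 0) := by
  obtain ⟨hP, e3, e4⟩ := pow_facts n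
  constructor
  · rw [show 2^(n+4) - (n-1) = (2^(n+4) + k) - (k + (n-1)) by omega,
      eN_symm (by omega), Lpow (n+4) k _ (by omega) (by omega)]
    exact eN_zero_of_lt (by omega)
  · rw [show 2^(n+4) - (2^(n+4) - (n-1)) = n-1 by omega,
      Lpow (n+4) k _ (by omega) (by omega)]
    exact eN_small_delta (by omega)

lemma br2_seq {n k : ℕ} (hn : 2 ≤ n) (hk : 1 ≤ k) (hkn : k < n) :
    eN ((2^(n+4) - 1) + k) (2^(n+4) - (n-1)) = 0 ∧
    eN ((2^(n+4) - 1) + k) ((2^(n+4) - 1) - (2^(n+4) - (n-1))) = (if k = n-1 then 1 else 0) := by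
  obtain ⟨hP, e3, e4⟩ := pow_facts n
  constructor
  · rw [show 2^(n+4) - (n-1) = ((2^(n+4) - 1) + k) - ((k-1) + (n-1)) by omega,
      eN_symm (by omega), show (2^(n+4) - 1) + k = 2^(n+4) + (k-1) by omega,
      Lpow (n+4) (k-1) _ (by omega) (by omega)]
    exact eN_zero_of_lt (by omega)
  · rw [show (2^(n+4) - 1) - (2^(n+4) - (n-1)) = n-2 by omega,
      show (2^(n+4) - 1) + k = 2^(n+4) + (k-1) by omega,
      Lpow (n+4) (k-1) _ (by omega) (by omega)]
    have := eN_small_delta (m := k-1) (ν := n-2) (by omega)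
    rw [this]
    by_cases h : k = n-1
    · rw [if_pos (by omega), if_pos h]
    · rw [if_neg (by omega), if_neg h]


lemma edgeB {r j k : ℕ} (hj : j ≤ r) : eN (r+k) (j+k) = eN (r+k) (r-j) := by
  rw [show r - j = (r+k) - (j+k) by omega, eN_symm (by omega)]

lemma topcut_eq_iff' {n r j r' j' : ℕ} (hj : j ≤ r) (hj' : j' ≤ r') :
    topCutPattern n r (2*j) = topCutPattern n r' (2*j') ↔
    (∀ k, 1 ≤ k → k < n → eN (r+k) j = eN (r'+k) j' ∧
      eN (r+k) (r-j) = eN (r'+k) (r'-j')) := by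
  rw [topcut_eq_iff]
  constructor <;> intro H k h1 h2 <;> obtain ⟨u, v⟩ := H k h1 h2 <;> refine ⟨u, ?_⟩
  · rw [← edgeB hj, ← edgeB hj']
    exact v
  · rw [edgeB hj, edgeB hj']
    exact v

/-- r even at positions realizing the apex-child pattern -/
lemma class_P1 {r j : ℕ} (hj : j ≤ r) (a1 : eN (r+1) j = 1) (b1 : eN (r+1) (r-j) = 1) :
    r % 2 = 0 := by
  by_contra h
  have h1 : j % 2 = 0 := L1 (by omega) a1
  have h2 : (r-j) % 2 = 0 := L1 (by omega) b1
  omega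

lemma class_bl {n r j : ℕ} (hn : 2 ≤ n) (hj : j ≤ r)
    (aν : eN (r+(n-1)) j = 1) (aprev : 3 ≤ n → eN (r+(n-2)) j = 0)
    (b1 : eN (r+1) (r-j) = 0) : j % 2 = (r+(n-1)) % 2 := by
  rcases (by omega : n = 2 ∨ 3 ≤ n) with h2 | h3
  · subst h2
    rcases (by omega : (r+1) % 2 = 0 ∨ (r+1) % 2 = 1) with hp | hp
    · have := L1 hp (by rw [show r+(2-1) = r+1 by omega] at aν; exact aν)
      omega
    · rcases (by omega : j % 2 = 0 ∨ j % 2 = 1) with hq | hq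
      · exfalso
        have := L6 (by omega) hq hj (by rw [show r+(2-1) = r+1 by omega] at aν; exact aν)
        omega
      · omega
  · exact L7 aν (by rw [show r+(n-1)-1 = r+(n-2) by omega]; exact aprev h3) (by omega)

lemma class_br {n r j : ℕ} (hn : 2 ≤ n) (hj : j ≤ r)
    (bν : eN (r+(n-1)) (r-j) = 1) (bprev : 3 ≤ n → eN (r+(n-2)) (r-j) = 0)
    (a1 : eN (r+1) j = 0) : j % 2 = (n-1) % 2 := by
  have hD : (r-j) % 2 = (r+(n-1)) % 2 := by
    rcases (by omega : n = 2 ∨ 3 ≤ n) with h2 | h3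
    · subst h2
      rcases (by omega : (r+1) % 2 = 0 ∨ (r+1) % 2 = 1) with hp | hp
      · have := L1 hp (by rw [show r+(2-1) = r+1 by omega] at bν; exact bν)
        omega
      · rcases (by omega : (r-j) % 2 = 0 ∨ (r-j) % 2 = 1) with hq | hq
        · exfalso
          have := L6 (r := r) (J := r - j) (by omega) hq (by omega)
            (by rw [show r+(2-1) = r+1 by omega] at bν; exact bν)
          rw [show r - (r-j) = j by omega] at this
          omega
        · omega
    · exact L7 bν (by rw [show r+(n-1)-1 = r+(n-2) by omega]; exact bprev h3) (by omega)
  omega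

/-- the four special patterns -/
def pBlank (n : ℕ) : ℕ × ℕ → Bool := topCutPattern n (2^(n+4) + 2*n) (2*(2^(n+3)))
def pP1 (n : ℕ) : ℕ × ℕ → Bool := topCutPattern n (2^(n+4) - 2) (2*(2^(n+3)))
def pBl (n : ℕ) : ℕ × ℕ → Bool := topCutPattern n (2^(n+4)) (2*(n-1))
def pBr (n : ℕ) : ℕ × ℕ → Bool := topCutPattern n (2^(n+4)) (2*(2^(n+4) - (n-1)))

lemma eq_pBlank_iff {n r j : ℕ} (hn : 2 ≤ n) (hj : j ≤ r) :
    topCutPattern n r (2*j) = pBlank n ↔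
    (∀ k, 1 ≤ k → k < n → eN (r+k) j = 0 ∧ eN (r+k) (r-j) = 0) := by
  obtain ⟨hP, e3, e4⟩ := pow_facts n
  unfold pBlank
  rw [topcut_eq_iff' hj (by omega)]
  constructor <;> intro H k h1 h2 <;> obtain ⟨u, v⟩ := H k h1 h2 <;>
    obtain ⟨w1, w2⟩ := blank_seq (x := 2*n) (ε := 0) hn (by omega) (by omega) (by omega) h1 h2 <;>
    rw [add_zero] at w1 w2
  · exact ⟨by rw [u, w1], by rw [v, w2]⟩
  · exact ⟨by rw [u, w1], by rw [v, w2]⟩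

lemma eq_pP1_iff {n r j : ℕ} (hn : 2 ≤ n) (hj : j ≤ r) :
    topCutPattern n r (2*j) = pP1 n ↔
    (eN (r+1) j = 1 ∧ eN (r+1) (r-j) = 1 ∧
      ∀ k, 2 ≤ k → k < n → eN (r+k) j = 0 ∧ eN (r+k) (r-j) = 0) := by
  obtain ⟨hP, e3, e4⟩ := pow_facts n
  unfold pP1
  rw [topcut_eq_iff' hj (by omega)]
  constructor
  · intro H
    obtain ⟨u1, v1⟩ := H 1 (by omega) (by omega)
    obtain ⟨w1, w2⟩ := P1_seq (ε := 0) (k := 1) hn (by omega) (by omega) (by omega)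
    rw [add_zero] at w1 w2
    rw [if_pos rfl] at w1 w2
    refine ⟨by rw [u1, w1], by rw [v1, w2], fun k hk2 hkn => ?_⟩
    obtain ⟨u, v⟩ := H k (by omega) hkn
    obtain ⟨z1, z2⟩ := P1_seq (ε := 0) hn (by omega) (by omega : 1 ≤ k) hkn
    rw [add_zero] at z1 z2
    rw [if_neg (by omega)] at z1 z2
    exact ⟨by rw [u, z1], by rw [v, z2]⟩
  · intro ⟨u1, v1, H⟩ k hk1 hkn
    obtain ⟨w1, w2⟩ := P1_seq (ε := 0) hn (by omega) hk1 hkn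
    rw [add_zero] at w1 w2
    rcases (by omega : k = 1 ∨ 2 ≤ k) with rfl | hk2
    · rw [if_pos rfl] at w1 w2
      exact ⟨by rw [u1, w1], by rw [v1, w2]⟩
    · rw [if_neg (by omega)] at w1 w2
      obtain ⟨z1, z2⟩ := H k hk2 hkn
      exact ⟨by rw [z1, w1], by rw [z2, w2]⟩

lemma eq_pBl_iff {n r j : ℕ} (hn : 2 ≤ n) (hj : j ≤ r) :
    topCutPattern n r (2*j) = pBl n ↔
    (eN (r+(n-1)) j = 1 ∧ (∀ k, 1 ≤ k → k < n-1 → eN (r+k) j = 0) ∧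
      (∀ k, 1 ≤ k → k < n → eN (r+k) (r-j) = 0)) := by
  obtain ⟨hP, e3, e4⟩ := pow_facts n
  unfold pBl
  rw [topcut_eq_iff' hj (by omega)]
  constructor
  · intro H
    obtain ⟨u1, v1⟩ := H (n-1) (by omega) (by omega)
    obtain ⟨w1, _⟩ := bl1_seq hn (by omega : 1 ≤ n-1) (by omega)
    rw [if_pos rfl] at w1
    refine ⟨by rw [u1, w1], fun k hk1 hkn => ?_, fun k hk1 hkn => ?_⟩
    · obtain ⟨u, _⟩ := H k hk1 (by omega)
      obtain ⟨z1, _⟩ := bl1_seq hn hk1 (by omega : k < n)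
      rw [if_neg (by omega)] at z1
      rw [u, z1]
    · obtain ⟨_, v⟩ := H k hk1 hkn
      obtain ⟨_, z2⟩ := bl1_seq hn hk1 hkn
      rw [v, z2]
  · intro ⟨u1, HA, HB⟩ k hk1 hkn
    obtain ⟨w1, w2⟩ := bl1_seq hn hk1 hkn
    constructor
    · rcases (by omega : k = n-1 ∨ k < n-1) with rfl | hlt
      · rw [if_pos rfl] at w1
        rw [u1, w1]
      · rw [if_neg (by omega)] at w1
        rw [HA k hk1 hlt, w1]
    · rw [HB k hk1 hkn, w2]

lemma eq_pBr_iff {n r j : ℕ} (hn : 2 ≤ n) (hj : j ≤ r) :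
    topCutPattern n r (2*j) = pBr n ↔
    (eN (r+(n-1)) (r-j) = 1 ∧ (∀ k, 1 ≤ k → k < n-1 → eN (r+k) (r-j) = 0) ∧
      (∀ k, 1 ≤ k → k < n → eN (r+k) j = 0)) := by
  obtain ⟨hP, e3, e4⟩ := pow_facts n
  unfold pBr
  rw [topcut_eq_iff' hj (by omega)]
  constructor
  · intro H
    obtain ⟨u1, v1⟩ := H (n-1) (by omega) (by omega)
    obtain ⟨_, w2⟩ := br1_seq hn (by omega : 1 ≤ n-1) (by omega)
    rw [if_pos rfl] at w2
    refine ⟨by rw [v1, w2], fun k hk1 hkn => ?_, fun k hk1 hkn => ?_⟩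
    · obtain ⟨_, v⟩ := H k hk1 (by omega)
      obtain ⟨_, z2⟩ := br1_seq hn hk1 (by omega : k < n)
      rw [if_neg (by omega)] at z2
      rw [v, z2]
    · obtain ⟨u, _⟩ := H k hk1 hkn
      obtain ⟨z1, _⟩ := br1_seq hn hk1 hkn
      rw [u, z1]
  · intro ⟨v1, HB, HA⟩ k hk1 hkn
    obtain ⟨w1, w2⟩ := br1_seq hn hk1 hkn
    constructor
    · rw [HA k hk1 hkn, w1]
    · rcases (by omega : k = n-1 ∨ k < n-1) with rfl | hlt
      · rw [if_pos rfl] at w2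
        rw [v1, w2]
      · rw [if_neg (by omega)] at w2
        rw [HB k hk1 hlt, w2]

/-- main classification: non-special patterns determine both parities -/
lemma classify {n r j r' j' : ℕ} (hn : 2 ≤ n) (hj : j ≤ r) (hj' : j' ≤ r')
    (heq : topCutPattern n r (2*j) = topCutPattern n r' (2*j'))
    (g1 : topCutPattern n r (2*j) ≠ pBlank n)
    (g2 : topCutPattern n r (2*j) ≠ pP1 n)
    (g3 : topCutPattern n r (2*j) ≠ pBl n)
    (g4 : topCutPattern n r (2*j) ≠ pBr n) :
    r % 2 = r' % 2 ∧ j % 2 = j' % 2 := by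
  have H := (topcut_eq_iff' hj hj').mp heq
  exact det hn hj hj' (fun k a b => (H k a b).1) (fun k a b => (H k a b).2)
    (fun c => g1 ((eq_pBlank_iff hn hj).mpr c))
    (fun c => g2 ((eq_pP1_iff hn hj).mpr c))
    (fun c => g3 ((eq_pBl_iff hn hj).mpr c))
    (fun c => g4 ((eq_pBr_iff hn hj).mpr c))

lemma pP1_parity {n r j : ℕ} (hn : 2 ≤ n) (hj : j ≤ r)
    (h : topCutPattern n r (2*j) = pP1 n) : r % 2 = 0 := by
  obtain ⟨a1, b1, _⟩ := (eq_pP1_iff hn hj).mp h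
  exact class_P1 hj a1 b1

lemma pBl_parity {n r j : ℕ} (hn : 2 ≤ n) (hj : j ≤ r)
    (h : topCutPattern n r (2*j) = pBl n) : j % 2 = (r+(n-1)) % 2 := by
  obtain ⟨aν, HA, HB⟩ := (eq_pBl_iff hn hj).mp h
  exact class_bl hn hj aν (fun h3 => HA (n-2) (by omega) (by omega))
    (HB 1 (by omega) (by omega))

lemma pBr_parity {n r j : ℕ} (hn : 2 ≤ n) (hj : j ≤ r)
    (h : topCutPattern n r (2*j) = pBr n) : j % 2 = (n-1) % 2 := by
  obtain ⟨bν, HB, HA⟩ := (eq_pBr_iff hn hj).mp h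
  exact class_br hn hj bν (fun h3 => HB (n-2) (by omega) (by omega))
    (HA 1 (by omega) (by omega))


/-! ### Realization of special patterns at witness positions -/

lemma blank_realize {n x ε : ℕ} (hn : 2 ≤ n) (hx : 2 ≤ x) (hx2 : x ≤ 2*n+1) (hε : ε ≤ 1) :
    topCutPattern n (2^(n+4)+x) (2*(2^(n+3)+ε)) = pBlank n := by
  obtain ⟨hP, e3, e4⟩ := pow_facts n
  rw [eq_pBlank_iff hn (by omega)]
  intro k hk1 hkn
  exact blank_seq hn hx hx2 hε hk1 hkn

lemma P1_realize {n ε : ℕ} (hn : 2 ≤ n) (hε : ε ≤ 1) :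
    topCutPattern n (2^(n+4)-2) (2*(2^(n+3)+ε)) = pP1 n := by
  obtain ⟨hP, e3, e4⟩ := pow_facts n
  rw [eq_pP1_iff hn (by omega)]
  obtain ⟨w1, w2⟩ := P1_seq (ε := ε) (k := 1) hn hε (by omega) (by omega)
  rw [if_pos rfl] at w1 w2
  refine ⟨w1, w2, fun k hk2 hkn => ?_⟩
  obtain ⟨z1, z2⟩ := P1_seq (ε := ε) hn hε (by omega : 1 ≤ k) hkn
  rw [if_neg (by omega)] at z1 z2
  exact ⟨z1, z2⟩

lemma bl_realize2 {n : ℕ} (hn : 2 ≤ n) :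
    topCutPattern n (2^(n+4)-1) (2*(n-2)) = pBl n := by
  obtain ⟨hP, e3, e4⟩ := pow_facts n
  rw [eq_pBl_iff hn (by omega)]
  obtain ⟨w1, _⟩ := bl2_seq hn (by omega : 1 ≤ n-1) (by omega)
  rw [if_pos rfl] at w1
  refine ⟨w1, fun k hk1 hkn => ?_, fun k hk1 hkn => ?_⟩
  · obtain ⟨z1, _⟩ := bl2_seq hn hk1 (by omega : k < n)
    rw [if_neg (by omega)] at z1
    exact z1
  · exact (bl2_seq hn hk1 hkn).2

lemma br_realize2 {n : ℕ} (hn : 2 ≤ n) :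
    topCutPattern n (2^(n+4)-1) (2*(2^(n+4)-(n-1))) = pBr n := by
  obtain ⟨hP, e3, e4⟩ := pow_facts n
  rw [eq_pBr_iff hn (by omega)]
  obtain ⟨_, w2⟩ := br2_seq hn (by omega : 1 ≤ n-1) (by omega)
  rw [if_pos rfl] at w2
  refine ⟨w2, fun k hk1 hkn => ?_, fun k hk1 hkn => ?_⟩
  · obtain ⟨_, z2⟩ := br2_seq hn hk1 (by omega : k < n)
    rw [if_neg (by omega)] at z2
    exact z2
  · exact (br2_seq hn hk1 hkn).1

/-! ### Evaluation of patterns, for distinctness -/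

lemma topcut_apply_left {n r j k : ℕ} (hk : 1 ≤ k) (hkn : k < n) :
    topCutPattern n r (2*j) (k, 0) = decide (eN (r+k) j = 1) := by
  simp only [topCutPattern]
  rw [if_pos (show 1 ≤ (k,0).1 ∧ (k,0).1 < n ∧ (k,0).2 ≤ 2*(k,0).1 from ⟨hk, hkn, by omega⟩),
    show 2*j+(k,0).2 = 2*j from by omega, filled_even]

lemma topcut_apply_right {n r j k : ℕ} (hj : j ≤ r) (hk : 1 ≤ k) (hkn : k < n) :
    topCutPattern n r (2*j) (k, 2*k) = decide (eN (r+k) (r-j) = 1) := by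
  simp only [topCutPattern]
  rw [if_pos (show 1 ≤ (k,2*k).1 ∧ (k,2*k).1 < n ∧ (k,2*k).2 ≤ 2*(k,2*k).1 from
      ⟨hk, hkn, by omega⟩),
    show 2*j+(k,2*k).2 = 2*(j+k) from by omega, filled_even, edgeB hj]

lemma pBlank_ne_pP1 {n : ℕ} (hn : 2 ≤ n) : pBlank n ≠ pP1 n := by
  obtain ⟨hP, e3, e4⟩ := pow_facts n
  intro h
  have h1 := congrFun h (1, 0)
  rw [pBlank, pP1, topcut_apply_left (by omega) (by omega),
    topcut_apply_left (by omega) (by omega)] at h1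
  obtain ⟨w1, _⟩ := blank_seq (x := 2*n) (ε := 0) (k := 1) hn (by omega) (by omega) (by omega)
    (by omega) (by omega)
  obtain ⟨z1, _⟩ := P1_seq (ε := 0) (k := 1) hn (by omega) (by omega) (by omega)
  rw [add_zero] at w1 z1
  rw [if_pos rfl] at z1
  rw [w1, z1] at h1
  simp at h1

lemma pBlank_ne_pBl {n : ℕ} (hn : 2 ≤ n) : pBlank n ≠ pBl n := by
  obtain ⟨hP, e3, e4⟩ := pow_facts n
  intro h
  have h1 := congrFun h (n-1, 0)
  rw [pBlank, pBl, topcut_apply_left (by omega) (by omega),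
    topcut_apply_left (by omega) (by omega)] at h1
  obtain ⟨w1, _⟩ := blank_seq (x := 2*n) (ε := 0) (k := n-1) hn (by omega) (by omega) (by omega)
    (by omega) (by omega)
  obtain ⟨z1, _⟩ := bl1_seq (k := n-1) hn (by omega) (by omega)
  rw [add_zero] at w1
  rw [if_pos rfl] at z1
  rw [w1, z1] at h1
  simp at h1

lemma pBlank_ne_pBr {n : ℕ} (hn : 2 ≤ n) : pBlank n ≠ pBr n := by
  obtain ⟨hP, e3, e4⟩ := pow_facts n
  intro h
  have h1 := congrFun h (n-1, 2*(n-1))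
  rw [pBlank, pBr, topcut_apply_right (by omega) (by omega) (by omega),
    topcut_apply_right (by omega) (by omega) (by omega)] at h1
  obtain ⟨_, w2⟩ := blank_seq (x := 2*n) (ε := 0) (k := n-1) hn (by omega) (by omega) (by omega)
    (by omega) (by omega)
  obtain ⟨_, z2⟩ := br1_seq (k := n-1) hn (by omega) (by omega)
  rw [add_zero] at w2
  rw [if_pos rfl] at z2
  rw [w2, z2] at h1
  simp at h1

lemma pP1_ne_pBl {n : ℕ} (hn : 2 ≤ n) : pP1 n ≠ pBl n := by
  obtain ⟨hP, e3, e4⟩ := pow_facts n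
  intro h
  have h1 := congrFun h (1, 2*1)
  rw [pP1, pBl, topcut_apply_right (by omega) (by omega) (by omega),
    topcut_apply_right (by omega) (by omega) (by omega)] at h1
  obtain ⟨_, w2⟩ := P1_seq (ε := 0) (k := 1) hn (by omega) (by omega) (by omega)
  obtain ⟨_, z2⟩ := bl1_seq (k := 1) hn (by omega) (by omega)
  rw [add_zero] at w2
  rw [if_pos rfl] at w2
  rw [w2, z2] at h1
  simp at h1

lemma pP1_ne_pBr {n : ℕ} (hn : 2 ≤ n) : pP1 n ≠ pBr n := by
  obtain ⟨hP, e3, e4⟩ := pow_facts n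
  intro h
  have h1 := congrFun h (1, 0)
  rw [pP1, pBr, topcut_apply_left (by omega) (by omega),
    topcut_apply_left (by omega) (by omega)] at h1
  obtain ⟨w1, _⟩ := P1_seq (ε := 0) (k := 1) hn (by omega) (by omega) (by omega)
  obtain ⟨z1, _⟩ := br1_seq (k := 1) hn (by omega) (by omega)
  rw [add_zero] at w1
  rw [if_pos rfl] at w1
  rw [w1, z1] at h1
  simp at h1

lemma pBl_ne_pBr {n : ℕ} (hn : 2 ≤ n) : pBl n ≠ pBr n := by
  obtain ⟨hP, e3, e4⟩ := pow_facts n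
  intro h
  have h1 := congrFun h (n-1, 0)
  rw [pBl, pBr, topcut_apply_left (by omega) (by omega),
    topcut_apply_left (by omega) (by omega)] at h1
  obtain ⟨w1, _⟩ := bl1_seq (k := n-1) hn (by omega) (by omega)
  obtain ⟨z1, _⟩ := br1_seq (k := n-1) hn (by omega) (by omega)
  rw [if_pos rfl] at w1
  rw [w1, z1] at h1
  simp at h1

/-! ### Membership infrastructure -/

lemma mem_RC {n ρ γ r j : ℕ} (hj : j ≤ r) (hρ : r % 2 = ρ) (hγ : 2*(j % 2) = γ)
    {p : ℕ × ℕ → Bool} (hp : p = topCutPattern n r (2*j)) : p ∈ PtopCutRC n ρ γ :=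
  ⟨r, 2*j, by omega, by omega, hρ, by omega, hp⟩

lemma exists_of_mem_RC {n ρ γ : ℕ} {p : ℕ × ℕ → Bool} (h : p ∈ PtopCutRC n ρ γ) :
    ∃ r j, j ≤ r ∧ r % 2 = ρ ∧ 2*(j % 2) = γ ∧ p = topCutPattern n r (2*j) := by
  obtain ⟨r, c, hc2, hcr, hr, hc4, hp⟩ := h
  exact ⟨r, c/2, by omega, hr, by omega, by rw [hp, show 2*(c/2) = c by omega]⟩

lemma exists_of_mem_S {n : ℕ} {p : ℕ × ℕ → Bool} (h : p ∈ PtopCut n) :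
    ∃ r j, j ≤ r ∧ p = topCutPattern n r (2*j) := by
  obtain ⟨r, c, hc2, hcr, hp⟩ := h
  exact ⟨r, c/2, by omega, by rw [hp, show 2*(c/2) = c by omega]⟩

lemma RC_subset (n ρ γ : ℕ) : PtopCutRC n ρ γ ⊆ PtopCut n := by
  rintro p ⟨r, c, h1, h2, _, _, h5⟩
  exact ⟨r, c, h1, h2, h5⟩

lemma S_cover {n : ℕ} {p : ℕ × ℕ → Bool} (h : p ∈ PtopCut n) :
    p ∈ PtopCutRC n 0 0 ∪ (PtopCutRC n 1 0 ∪ (PtopCutRC n 1 2 ∪ PtopCutRC n 0 2)) := by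
  obtain ⟨r, j, hj, hp⟩ := exists_of_mem_S h
  rcases (by omega : r % 2 = 0 ∨ r % 2 = 1) with hr | hr <;>
    rcases (by omega : j % 2 = 0 ∨ j % 2 = 1) with hq | hq
  · exact Or.inl (mem_RC hj hr (by omega) hp)
  · exact Or.inr (Or.inr (Or.inr (mem_RC hj hr (by omega) hp)))
  · exact Or.inr (Or.inl (mem_RC hj hr (by omega) hp))
  · exact Or.inr (Or.inr (Or.inl (mem_RC hj hr (by omega) hp)))

/-! ### Specials: exact class membership -/

lemma pBlank_mem_RC {n ρ γ : ℕ} (hn : 2 ≤ n) (hρ : ρ ≤ 1) (hγ : γ = 0 ∨ γ = 2) :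
    pBlank n ∈ PtopCutRC n ρ γ := by
  obtain ⟨hP, e3, e4⟩ := pow_facts n
  refine mem_RC (r := 2^(n+4) + (2*n+ρ)) (j := 2^(n+3) + γ/2) (by omega) (by omega) (by omega)
    (blank_realize hn (by omega) (by omega) (by omega)).symm

lemma pP1_mem_RC {n γ : ℕ} (hn : 2 ≤ n) (hγ : γ = 0 ∨ γ = 2) :
    pP1 n ∈ PtopCutRC n 0 γ := by
  obtain ⟨hP, e3, e4⟩ := pow_facts n
  refine mem_RC (r := 2^(n+4) - 2) (j := 2^(n+3) + γ/2) (by omega) (by omega) (by omega)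
    (P1_realize hn (by omega)).symm

lemma pBl_mem_even {n : ℕ} (hn : 2 ≤ n) : pBl n ∈ PtopCutRC n 0 (2*((n-1) % 2)) := by
  obtain ⟨hP, e3, e4⟩ := pow_facts n
  exact mem_RC (r := 2^(n+4)) (j := n-1) (by omega) (by omega) rfl rfl

lemma pBl_mem_odd {n : ℕ} (hn : 2 ≤ n) : pBl n ∈ PtopCutRC n 1 (2*((n-2) % 2)) := by
  obtain ⟨hP, e3, e4⟩ := pow_facts n
  exact mem_RC (r := 2^(n+4) - 1) (j := n-2) (by omega) (by omega) rfl (bl_realize2 hn).symm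

lemma pBr_mem_even {n : ℕ} (hn : 2 ≤ n) : pBr n ∈ PtopCutRC n 0 (2*((n-1) % 2)) := by
  obtain ⟨hP, e3, e4⟩ := pow_facts n
  refine mem_RC (r := 2^(n+4)) (j := 2^(n+4) - (n-1)) (by omega) (by omega) ?_ rfl
  omega

lemma pBr_mem_odd {n : ℕ} (hn : 2 ≤ n) : pBr n ∈ PtopCutRC n 1 (2*((n-1) % 2)) := by
  obtain ⟨hP, e3, e4⟩ := pow_facts n
  refine mem_RC (r := 2^(n+4) - 1) (j := 2^(n+4) - (n-1)) (by omega) (by omega) ?_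
    (br_realize2 hn).symm
  omega

lemma pP1_class {n ρ γ : ℕ} (hn : 2 ≤ n) (h : pP1 n ∈ PtopCutRC n ρ γ) : ρ = 0 := by
  obtain ⟨r, j, hj, hr, hγ, hp⟩ := exists_of_mem_RC h
  have := pP1_parity hn hj hp.symm
  omega

lemma pBl_class {n ρ γ : ℕ} (hn : 2 ≤ n) (h : pBl n ∈ PtopCutRC n ρ γ) :
    γ = 2*((ρ + (n-1)) % 2) := by
  obtain ⟨r, j, hj, hr, hγ, hp⟩ := exists_of_mem_RC h
  have := pBl_parity hn hj hp.symm
  omega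

lemma pBr_class {n ρ γ : ℕ} (hn : 2 ≤ n) (h : pBr n ∈ PtopCutRC n ρ γ) :
    γ = 2*((n-1) % 2) := by
  obtain ⟨r, j, hj, hr, hγ, hp⟩ := exists_of_mem_RC h
  have := pBr_parity hn hj hp.symm
  omega

/-! ### Disjointness of classes away from the special patterns -/

lemma classes_disjoint {n : ℕ} (hn : 2 ≤ n) {ρ γ ρ' γ' : ℕ}
    (hne : ¬(ρ = ρ' ∧ γ = γ')) {p : ℕ × ℕ → Bool}
    (h1 : p ∈ PtopCutRC n ρ γ) (h2 : p ∈ PtopCutRC n ρ' γ')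
    (g1 : p ≠ pBlank n) (g2 : p ≠ pP1 n) (g3 : p ≠ pBl n) (g4 : p ≠ pBr n) : False := by
  obtain ⟨r, j, hj, hr, hγ, hp⟩ := exists_of_mem_RC h1
  obtain ⟨r', j', hj', hr', hγ', hp'⟩ := exists_of_mem_RC h2
  subst hp
  obtain ⟨e1, e2⟩ := classify hn hj hj' (hp'.symm.trans rfl ▸ hp') g1 g2 g3 g4
  omega

/-! ### Finiteness -/

lemma S_finite (n : ℕ) : (PtopCut n).Finite := by
  have hfin : Finite (PtopCut n) := by
    apply Finite.of_injective
      (fun p : PtopCut n => (fun q : Fin n × Fin (2*n) => p.val (q.1.val, q.2.val)))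
    intro p1 p2 hf
    apply Subtype.ext
    obtain ⟨r, c, _, _, hp1⟩ := p1.2
    obtain ⟨r', c', _, _, hp2⟩ := p2.2
    funext q
    obtain ⟨a, b⟩ := q
    by_cases h : a < n ∧ b < 2*n
    · exact congrFun hf (⟨a, h.1⟩, ⟨b, h.2⟩)
    · show p1.val (a, b) = p2.val (a, b)
      rw [hp1, hp2]
      simp only [topCutPattern]
      rw [if_neg (by rintro ⟨x, y, z⟩; omega), if_neg (by rintro ⟨x, y, z⟩; omega)]
  exact Set.finite_coe_iff.mp hfin

lemma diffs_disjoint {n : ℕ} (hn : 2 ≤ n) {ρ γ ρ' γ' : ℕ} (hne : ¬(ρ = ρ' ∧ γ = γ')) :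
    Disjoint (PtopCutRC n ρ γ \ {pBlank n, pP1 n, pBl n, pBr n})
             (PtopCutRC n ρ' γ' \ {pBlank n, pP1 n, pBl n, pBr n}) := by
  rw [Set.disjoint_left]
  rintro p ⟨h1, hg⟩ ⟨h2, _⟩
  simp only [Set.mem_insert_iff, Set.mem_singleton_iff, not_or] at hg
  exact classes_disjoint hn hne h1 h2 hg.1 hg.2.1 hg.2.2.1 hg.2.2.2

theorem sierpinski_topcut_additivity (n : ℕ) (hn : 2 ≤ n) :
    (PtopCutRC n 0 0).ncard + (PtopCutRC n 1 0).ncard + (PtopCutRC n 1 2).ncard +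
      (PtopCutRC n 0 2).ncard = (PtopCut n).ncard + 6 := by
  have hSfin := S_finite n
  have hSpfin : ({pBlank n, pP1 n, pBl n, pBr n} : Set (ℕ × ℕ → Bool)).Finite :=
    (((Set.finite_singleton _).insert _).insert _).insert _
  have d12 := pBlank_ne_pP1 hn
  have d13 := pBlank_ne_pBl hn
  have d14 := pBlank_ne_pBr hn
  have d23 := pP1_ne_pBl hn
  have d24 := pP1_ne_pBr hn
  have d34 := pBl_ne_pBr hn
  have hSpS : {pBlank n, pP1 n, pBl n, pBr n} ⊆ PtopCut n := by
    intro p hp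
    rcases hp with rfl | rfl | rfl | rfl
    · exact RC_subset n 0 0 (pBlank_mem_RC hn (by omega) (Or.inl rfl))
    · exact RC_subset n 0 0 (pP1_mem_RC hn (Or.inl rfl))
    · exact RC_subset n 0 _ (pBl_mem_even hn)
    · exact RC_subset n 0 _ (pBr_mem_even hn)
  have hAfin := hSfin.subset (RC_subset n 0 0)
  have hBfin := hSfin.subset (RC_subset n 1 0)
  have hCfin := hSfin.subset (RC_subset n 1 2)
  have hDfin := hSfin.subset (RC_subset n 0 2)
  -- decomposition of each class into special and generic part
  have decompA := (Set.ncard_inter_add_ncard_diff_eq_ncard (PtopCutRC n 0 0) {pBlank n, pP1 n, pBl n, pBr n} hAfin).symm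
  have decompB := (Set.ncard_inter_add_ncard_diff_eq_ncard (PtopCutRC n 1 0) {pBlank n, pP1 n, pBl n, pBr n} hBfin).symm
  have decompC := (Set.ncard_inter_add_ncard_diff_eq_ncard (PtopCutRC n 1 2) {pBlank n, pP1 n, pBl n, pBr n} hCfin).symm
  have decompD := (Set.ncard_inter_add_ncard_diff_eq_ncard (PtopCutRC n 0 2) {pBlank n, pP1 n, pBl n, pBr n} hDfin).symm
  have decompS := (Set.ncard_inter_add_ncard_diff_eq_ncard (PtopCut n) {pBlank n, pP1 n, pBl n, pBr n} hSfin).symm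
  have hSSp : PtopCut n ∩ {pBlank n, pP1 n, pBl n, pBr n} = {pBlank n, pP1 n, pBl n, pBr n} := Set.inter_eq_self_of_subset_right hSpS
  -- |{pBlank n, pP1 n, pBl n, pBr n}| = 4
  have hSp4 : ({pBlank n, pP1 n, pBl n, pBr n} : Set (ℕ × ℕ → Bool)).ncard = 4 := by
    rw [Set.ncard_insert_of_notMem (by simp [d12, d13, d14])
      (((Set.finite_singleton _).insert _).insert _)]
    rw [Set.ncard_insert_of_notMem (by simp [d23, d24]) ((Set.finite_singleton _).insert _)]
    rw [Set.ncard_pair d34]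
  have hSSp4 : (PtopCut n ∩ {pBlank n, pP1 n, pBl n, pBr n}).ncard = 4 := by
    rw [hSSp]
    exact hSp4
  -- generic part of S splits as disjoint union of the four generic class parts
  have hU : PtopCut n \ {pBlank n, pP1 n, pBl n, pBr n} =
      (PtopCutRC n 0 0 \ {pBlank n, pP1 n, pBl n, pBr n}) ∪ ((PtopCutRC n 1 0 \ {pBlank n, pP1 n, pBl n, pBr n}) ∪
        ((PtopCutRC n 1 2 \ {pBlank n, pP1 n, pBl n, pBr n}) ∪ (PtopCutRC n 0 2 \ {pBlank n, pP1 n, pBl n, pBr n}))) := by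
    ext p
    constructor
    · rintro ⟨hS, hsp⟩
      rcases S_cover hS with h | h | h | h
      · exact Or.inl ⟨h, hsp⟩
      · exact Or.inr (Or.inl ⟨h, hsp⟩)
      · exact Or.inr (Or.inr (Or.inl ⟨h, hsp⟩))
      · exact Or.inr (Or.inr (Or.inr ⟨h, hsp⟩))
    · rintro (⟨h, hsp⟩ | ⟨h, hsp⟩ | ⟨h, hsp⟩ | ⟨h, hsp⟩)
      · exact ⟨RC_subset n 0 0 h, hsp⟩
      · exact ⟨RC_subset n 1 0 h, hsp⟩
      · exact ⟨RC_subset n 1 2 h, hsp⟩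
      · exact ⟨RC_subset n 0 2 h, hsp⟩
  have hUcard : (PtopCut n \ {pBlank n, pP1 n, pBl n, pBr n}).ncard =
      (PtopCutRC n 0 0 \ {pBlank n, pP1 n, pBl n, pBr n}).ncard + (PtopCutRC n 1 0 \ {pBlank n, pP1 n, pBl n, pBr n}).ncard +
      (PtopCutRC n 1 2 \ {pBlank n, pP1 n, pBl n, pBr n}).ncard + (PtopCutRC n 0 2 \ {pBlank n, pP1 n, pBl n, pBr n}).ncard := by
    rw [hU]
    rw [Set.ncard_union_eq (by
        refine Set.disjoint_union_right.mpr ⟨diffs_disjoint hn (by omega), ?_⟩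
        exact Set.disjoint_union_right.mpr
          ⟨diffs_disjoint hn (by omega), diffs_disjoint hn (by omega)⟩)
      (hAfin.diff (t := {pBlank n, pP1 n, pBl n, pBr n})) (((hBfin.diff (t := {pBlank n, pP1 n, pBl n, pBr n})).union ((hCfin.diff (t := {pBlank n, pP1 n, pBl n, pBr n})).union (hDfin.diff (t := {pBlank n, pP1 n, pBl n, pBr n})))))]
    rw [Set.ncard_union_eq (by
        exact Set.disjoint_union_right.mpr
          ⟨diffs_disjoint hn (by omega), diffs_disjoint hn (by omega)⟩)
      (hBfin.diff (t := {pBlank n, pP1 n, pBl n, pBr n})) ((hCfin.diff (t := {pBlank n, pP1 n, pBl n, pBr n})).union (hDfin.diff (t := {pBlank n, pP1 n, pBl n, pBr n})))]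
    rw [Set.ncard_union_eq (diffs_disjoint hn (by omega)) (hCfin.diff (t := {pBlank n, pP1 n, pBl n, pBr n})) (hDfin.diff (t := {pBlank n, pP1 n, pBl n, pBr n}))]
    omega
  -- special parts of the classes
  have hblA : pBlank n ∈ PtopCutRC n 0 0 := pBlank_mem_RC hn (by omega) (Or.inl rfl)
  have hblB : pBlank n ∈ PtopCutRC n 1 0 := pBlank_mem_RC hn (by omega) (Or.inl rfl)
  have hblC : pBlank n ∈ PtopCutRC n 1 2 := pBlank_mem_RC hn (by omega) (Or.inr rfl)
  have hblD : pBlank n ∈ PtopCutRC n 0 2 := pBlank_mem_RC hn (by omega) (Or.inr rfl)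
  have hcards : (PtopCutRC n 0 0 ∩ {pBlank n, pP1 n, pBl n, pBr n}).ncard + (PtopCutRC n 1 0 ∩ {pBlank n, pP1 n, pBl n, pBr n}).ncard +
      (PtopCutRC n 1 2 ∩ {pBlank n, pP1 n, pBl n, pBr n}).ncard + (PtopCutRC n 0 2 ∩ {pBlank n, pP1 n, pBl n, pBr n}).ncard = 10 := by
    rcases (by omega : n % 2 = 0 ∨ n % 2 = 1) with hpar | hpar
    · -- n even : ν odd
      have eA : PtopCutRC n 0 0 ∩ {pBlank n, pP1 n, pBl n, pBr n} = {pBlank n, pP1 n} := by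
        ext p
        constructor
        · rintro ⟨hA, rfl | rfl | rfl | rfl⟩
          · exact Or.inl rfl
          · exact Or.inr rfl
          · exact absurd (pBl_class hn hA) (by omega)
          · exact absurd (pBr_class hn hA) (by omega)
        · rintro (rfl | rfl)
          · exact ⟨hblA, Or.inl rfl⟩
          · exact ⟨pP1_mem_RC hn (Or.inl rfl), Or.inr (Or.inl rfl)⟩
      have eB : PtopCutRC n 1 0 ∩ {pBlank n, pP1 n, pBl n, pBr n} = {pBlank n, pBl n} := by
        ext p
        constructor
        · rintro ⟨hA, rfl | rfl | rfl | rfl⟩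
          · exact Or.inl rfl
          · exact absurd (pP1_class hn hA) (by omega)
          · exact Or.inr rfl
          · exact absurd (pBr_class hn hA) (by omega)
        · rintro (rfl | rfl)
          · exact ⟨hblB, Or.inl rfl⟩
          · exact ⟨by have := pBl_mem_odd hn; rwa [show 2*((n-2) % 2) = 0 by omega] at this,
              Or.inr (Or.inr (Or.inl rfl))⟩
      have eC : PtopCutRC n 1 2 ∩ {pBlank n, pP1 n, pBl n, pBr n} = {pBlank n, pBr n} := by
        ext p
        constructor
        · rintro ⟨hA, rfl | rfl | rfl | rfl⟩
          · exact Or.inl rfl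
          · exact absurd (pP1_class hn hA) (by omega)
          · exact absurd (pBl_class hn hA) (by omega)
          · exact Or.inr rfl
        · rintro (rfl | rfl)
          · exact ⟨hblC, Or.inl rfl⟩
          · exact ⟨by have := pBr_mem_odd hn; rwa [show 2*((n-1) % 2) = 2 by omega] at this,
              Or.inr (Or.inr (Or.inr rfl))⟩
      have eD : PtopCutRC n 0 2 ∩ {pBlank n, pP1 n, pBl n, pBr n} = {pBlank n, pP1 n, pBl n, pBr n} := by
        apply Set.inter_eq_self_of_subset_right
        intro p hp
        rcases hp with rfl | rfl | rfl | rfl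
        · exact hblD
        · exact pP1_mem_RC hn (Or.inr rfl)
        · have := pBl_mem_even hn; rwa [show 2*((n-1) % 2) = 2 by omega] at this
        · have := pBr_mem_even hn; rwa [show 2*((n-1) % 2) = 2 by omega] at this
      rw [eA, eB, eC, eD, Set.ncard_pair d12, Set.ncard_pair d13, Set.ncard_pair d14, hSp4]
    · -- n odd : ν even
      have eA : PtopCutRC n 0 0 ∩ {pBlank n, pP1 n, pBl n, pBr n} = {pBlank n, pP1 n, pBl n, pBr n} := by
        apply Set.inter_eq_self_of_subset_right
        intro p hp
        rcases hp with rfl | rfl | rfl | rfl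
        · exact hblA
        · exact pP1_mem_RC hn (Or.inl rfl)
        · have := pBl_mem_even hn; rwa [show 2*((n-1) % 2) = 0 by omega] at this
        · have := pBr_mem_even hn; rwa [show 2*((n-1) % 2) = 0 by omega] at this
      have eB : PtopCutRC n 1 0 ∩ {pBlank n, pP1 n, pBl n, pBr n} = {pBlank n, pBr n} := by
        ext p
        constructor
        · rintro ⟨hA, rfl | rfl | rfl | rfl⟩
          · exact Or.inl rfl
          · exact absurd (pP1_class hn hA) (by omega)
          · exact absurd (pBl_class hn hA) (by omega)
          · exact Or.inr rfl
        · rintro (rfl | rfl)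
          · exact ⟨hblB, Or.inl rfl⟩
          · exact ⟨by have := pBr_mem_odd hn; rwa [show 2*((n-1) % 2) = 0 by omega] at this,
              Or.inr (Or.inr (Or.inr rfl))⟩
      have eC : PtopCutRC n 1 2 ∩ {pBlank n, pP1 n, pBl n, pBr n} = {pBlank n, pBl n} := by
        ext p
        constructor
        · rintro ⟨hA, rfl | rfl | rfl | rfl⟩
          · exact Or.inl rfl
          · exact absurd (pP1_class hn hA) (by omega)
          · exact Or.inr rfl
          · exact absurd (pBr_class hn hA) (by omega)
        · rintro (rfl | rfl)
          · exact ⟨hblC, Or.inl rfl⟩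
          · exact ⟨by have := pBl_mem_odd hn; rwa [show 2*((n-2) % 2) = 2 by omega] at this,
              Or.inr (Or.inr (Or.inl rfl))⟩
      have eD : PtopCutRC n 0 2 ∩ {pBlank n, pP1 n, pBl n, pBr n} = {pBlank n, pP1 n} := by
        ext p
        constructor
        · rintro ⟨hA, rfl | rfl | rfl | rfl⟩
          · exact Or.inl rfl
          · exact Or.inr rfl
          · exact absurd (pBl_class hn hA) (by omega)
          · exact absurd (pBr_class hn hA) (by omega)
        · rintro (rfl | rfl)
          · exact ⟨hblD, Or.inl rfl⟩
          · exact ⟨pP1_mem_RC hn (Or.inr rfl), Or.inr (Or.inl rfl)⟩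
      rw [eA, eB, eC, eD, Set.ncard_pair d14, Set.ncard_pair d13, Set.ncard_pair d12, hSp4]
  omega
end

section
/- Let n ≥ 1 and set N = 2n. Then: P_up^{(0,0)}(N) ∩ P_up^{(1,0)}(N) = {blank_N}; P_up^{(0,0)}(N) ∩ P_up^{(1,2)}(N) = {blank_N}; P_up^{(0,0)}(N) ∩ P_up^{(0,2)}(N) = {blank_N}; P_up^{(1,0)}(N) ∩ P_up^{(1,2)}(N) = {blank_N, top_N}; P_up^{(1,0)}(N) ∩ P_up^{(0,2)}(N) = {blank_N, botleft_N}; and P_up^{(1,2)}(N) ∩ P_up^{(0,2)}(N) = {blank_N, botright_N}. -/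
set_option linter.dupNamespace false
namespace SierpAux
open Nat

lemma digit' (x y : ℕ) :
    choose x y % 2 = (choose (x % 2) (y % 2) * choose (x / 2) (y / 2)) % 2 :=
  @Choose.choose_modEq_choose_mod_mul_choose_div_nat x y 2 ⟨Nat.prime_two⟩

lemma chooseP_ee (R J : ℕ) : choose (2*R) (2*J) % 2 = choose R J % 2 := by
  rw [digit' (2*R) (2*J)]
  have h1 : 2*R % 2 = 0 := by omega
  have h2 : 2*J % 2 = 0 := by omega
  have h3 : 2*R / 2 = R := by omega
  have h4 : 2*J / 2 = J := by omega
  simp [h1, h2, h3, h4]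

lemma chooseP_eo (R J : ℕ) : choose (2*R) (2*J+1) % 2 = 0 := by
  rw [digit' (2*R) (2*J+1)]
  have h1 : 2*R % 2 = 0 := by omega
  have h2 : (2*J+1) % 2 = 1 := by omega
  simp [h1, h2]

lemma chooseP_oe (R J : ℕ) : choose (2*R+1) (2*J) % 2 = choose R J % 2 := by
  rw [digit' (2*R+1) (2*J)]
  have h1 : (2*R+1) % 2 = 1 := by omega
  have h2 : 2*J % 2 = 0 := by omega
  have h3 : (2*R+1) / 2 = R := by omega
  have h4 : 2*J / 2 = J := by omega
  simp [h1, h2, h3, h4]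

lemma chooseP_oo (R J : ℕ) : choose (2*R+1) (2*J+1) % 2 = choose R J % 2 := by
  rw [digit' (2*R+1) (2*J+1)]
  have h1 : (2*R+1) % 2 = 1 := by omega
  have h2 : (2*J+1) % 2 = 1 := by omega
  have h3 : (2*R+1) / 2 = R := by omega
  have h4 : (2*J+1) / 2 = J := by omega
  simp [h1, h2, h3, h4]

lemma filled_odd (x y : ℕ) (h : y % 2 = 1) : filled x y = false := by
  simp [filled, h]

lemma filled_e2 (x y : ℕ) (hx : x % 2 = 0) (hy : y % 4 = 2) : filled x y = false := by
  have h2 : y % 2 = 0 := by omega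
  have hz : choose x (y/2) % 2 = 0 := by
    have e1 : x = 2*(x/2) := by omega
    have e2 : y/2 = 2*(y/4)+1 := by omega
    calc choose x (y/2) % 2 = choose (2*(x/2)) (2*(y/4)+1) % 2 := by rw [← e1, ← e2]
    _ = 0 := chooseP_eo _ _
  simp [filled, h2, hz]

lemma filled_pair (x y : ℕ) (hx : x % 2 = 1) (hy : y % 4 = 0) :
    filled x (y+2) = filled x y := by
  have hy2 : y % 2 = 0 := by omega
  have hy2' : (y+2) % 2 = 0 := by omega
  have e1 : choose x ((y+2)/2) % 2 = choose (x/2) (y/4) % 2 := by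
    have a1 : x = 2*(x/2)+1 := by omega
    have a2 : (y+2)/2 = 2*(y/4)+1 := by omega
    calc choose x ((y+2)/2) % 2 = choose (2*(x/2)+1) (2*(y/4)+1) % 2 := by rw [← a1, ← a2]
    _ = _ := chooseP_oo _ _
  have e2 : choose x (y/2) % 2 = choose (x/2) (y/4) % 2 := by
    have a1 : x = 2*(x/2)+1 := by omega
    have a2 : y/2 = 2*(y/4) := by omega
    calc choose x (y/2) % 2 = choose (2*(x/2)+1) (2*(y/4)) % 2 := by rw [← a1, ← a2]
    _ = _ := chooseP_oe _ _
  have e1' : choose x (y/2+1) % 2 = choose (x/2) (y/4) % 2 := by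
    rw [show y/2+1 = (y+2)/2 from by omega]; exact e1
  simp only [filled, hy2, hy2', true_and, decide_eq_decide]
  omega

lemma filled_ud (x y : ℕ) (hx : x % 2 = 0) (hy : y % 4 = 0) :
    filled (x+1) y = filled x y := by
  have hy2 : y % 2 = 0 := by omega
  have e1 : choose (x+1) (y/2) % 2 = choose (x/2) (y/4) % 2 := by
    have a1 : x+1 = 2*(x/2)+1 := by omega
    have a2 : y/2 = 2*(y/4) := by omega
    calc choose (x+1) (y/2) % 2 = choose (2*(x/2)+1) (2*(y/4)) % 2 := by rw [← a1, ← a2]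
    _ = _ := chooseP_oe _ _
  have e2 : choose x (y/2) % 2 = choose (x/2) (y/4) % 2 := by
    have a1 : x = 2*(x/2) := by omega
    have a2 : y/2 = 2*(y/4) := by omega
    calc choose x (y/2) % 2 = choose (2*(x/2)) (2*(y/4)) % 2 := by rw [← a1, ← a2]
    _ = _ := chooseP_ee _ _
  simp only [filled, hy2, true_and, decide_eq_decide]
  omega

lemma H1 (K : ℕ) : ∀ s j, s < 2^K → j < 2^K → choose (2^K + s) j % 2 = choose s j % 2 := by
  induction K with
  | zero =>
    intro s j hs hj
    have hs0 : s = 0 := by omega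
    have hj0 : j = 0 := by omega
    subst hs0; subst hj0
    simp
  | succ K ih =>
    intro s j hs hj
    have hp : (2:ℕ)^(K+1) = 2^K * 2 := by rw [pow_succ]
    have hs' : s/2 < 2^K := by omega
    have hj' : j/2 < 2^K := by omega
    rw [digit' (2^(K+1)+s) j, digit' s j]
    have e1 : (2^(K+1)+s) % 2 = s % 2 := by omega
    have e2 : (2^(K+1)+s) / 2 = 2^K + s/2 := by omega
    rw [e1, e2, Nat.mul_mod, ih (s/2) (j/2) hs' hj', ← Nat.mul_mod]

lemma H2 (K : ℕ) : ∀ s u, s < 2^K → u < 2^K →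
    choose (2^K + s) (2^K + u) % 2 = choose s u % 2 := by
  induction K with
  | zero =>
    intro s u hs hu
    have hs0 : s = 0 := by omega
    have hu0 : u = 0 := by omega
    subst hs0; subst hu0
    simp
  | succ K ih =>
    intro s u hs hu
    have hp : (2:ℕ)^(K+1) = 2^K * 2 := by rw [pow_succ]
    have hs' : s/2 < 2^K := by omega
    have hu' : u/2 < 2^K := by omega
    rw [digit' (2^(K+1)+s) (2^(K+1)+u), digit' s u]
    have e1 : (2^(K+1)+s) % 2 = s % 2 := by omega
    have e2 : (2^(K+1)+s) / 2 = 2^K + s/2 := by omega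
    have e3 : (2^(K+1)+u) % 2 = u % 2 := by omega
    have e4 : (2^(K+1)+u) / 2 = 2^K + u/2 := by omega
    rw [e1, e2, e3, e4, Nat.mul_mod, ih (s/2) (u/2) hs' hu', ← Nat.mul_mod]

lemma ones (K : ℕ) : ∀ b, b ≤ 2^K - 1 → choose (2^K - 1) b % 2 = 1 := by
  induction K with
  | zero =>
    intro b hb
    have hb0 : b = 0 := by omega
    subst hb0; simp
  | succ K ih =>
    intro b hb
    have hp : (2:ℕ)^(K+1) = 2^K * 2 := by rw [pow_succ]
    have hK : 1 ≤ (2:ℕ)^K := Nat.one_le_two_pow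
    rw [digit' (2^(K+1)-1) b]
    have e1 : (2^(K+1)-1) % 2 = 1 := by omega
    have e2 : (2^(K+1)-1) / 2 = 2^K - 1 := by omega
    rw [e1, e2]
    have hb' : b/2 ≤ 2^K - 1 := by omega
    have := ih (b/2) hb'
    rcases Nat.mod_two_eq_zero_or_one b with h | h <;> rw [h] <;> simp [Nat.choose] <;> omega

lemma hole (K s j : ℕ) (h1 : s < j) (h2 : j < 2^K) : choose (2^K + s) j % 2 = 0 := by
  rw [H1 K s j (by omega) h2, Nat.choose_eq_zero_of_lt h1]


lemma filled_true (x y : ℕ) (h1 : y % 2 = 0) (h2 : choose x (y/2) % 2 = 1) :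
    filled x y = true := by simp [filled, h1, h2]

lemma filled_false_of (x y : ℕ) (h2 : choose x (y/2) % 2 = 0) :
    filled x y = false := by simp [filled, h2]

lemma blank_witness (K t j0 N : ℕ) (h1 : t + N ≤ j0) (h2 : j0 + N ≤ 2^K) :
    upPattern N (2^K + t) (2*j0) = blankUp := by
  funext q
  obtain ⟨k, m⟩ := q
  simp only [upPattern, blankUp]
  split
  next h =>
    obtain ⟨hk, hm⟩ := h
    rcases Nat.mod_two_eq_zero_or_one m with hme | hmo
    · refine filled_false_of _ _ ?_
      rw [show (2*j0+m)/2 = j0 + m/2 from by omega,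
          show 2^K+t+k = 2^K+(t+k) from by omega]
      exact hole K (t+k) (j0+m/2) (by omega) (by omega)
    · exact filled_odd _ _ (by omega)
  next => rfl

lemma top_witness (K b N : ℕ) (hN : 1 ≤ N) (h1 : N ≤ b) (h2 : b + N ≤ 2^K) :
    upPattern N (2^K - 1) (2*b) = topUp := by
  have hK : 1 ≤ (2:ℕ)^K := Nat.one_le_two_pow
  funext q
  obtain ⟨k, m⟩ := q
  simp only [upPattern]
  split
  next h =>
    obtain ⟨hk, hm⟩ := h
    by_cases hk0 : k = 0
    · subst hk0
      have hm0 : m = 0 := by omega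
      subst hm0
      have hR : topUp (0, 0) = true := by simp [topUp]
      rw [hR]
      refine filled_true _ _ (by omega) ?_
      rw [show (2*b+0)/2 = b from by omega]
      exact ones K b (by omega)
    · have hR : topUp (k, m) = false := by
        simp only [topUp, Prod.mk.injEq, decide_eq_false_iff_not]
        tauto
      rw [hR]
      rcases Nat.mod_two_eq_zero_or_one m with hme | hmo
      · refine filled_false_of _ _ ?_
        rw [show (2*b+m)/2 = b + m/2 from by omega,
            show 2^K-1+k = 2^K+(k-1) from by omega]
        exact hole K (k-1) (b+m/2) (by omega) (by omega)
      · exact filled_odd _ _ (by omega)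
  next h =>
    have hR : topUp (k, m) = false := by
      simp only [topUp, Prod.mk.injEq, decide_eq_false_iff_not]
      intro ⟨h1', h2'⟩
      exact h (by omega)
    rw [hR]

lemma botleft_witness (K d N : ℕ) (hN : 2 ≤ N) (hd : 1 ≤ d) (h2 : d + 2*N ≤ 2^K) :
    upPattern N (2^K + d) (2*(d+N-1)) = botleftUp N := by
  funext q
  obtain ⟨k, m⟩ := q
  simp only [upPattern]
  split
  next h =>
    obtain ⟨hk, hm⟩ := h
    by_cases hq : k = N-1 ∧ m = 0
    · obtain ⟨hq1, hq2⟩ := hq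
      subst hq1; subst hq2
      have hR : botleftUp N (N-1, 0) = true := by simp [botleftUp]
      rw [hR]
      refine filled_true _ _ (by omega) ?_
      rw [show (2*(d+N-1)+0)/2 = d+N-1 from by omega,
          show 2^K+d+(N-1) = 2^K+(d+N-1) from by omega,
          H1 K (d+N-1) (d+N-1) (by omega) (by omega), Nat.choose_self]
    · have hR : botleftUp N (k, m) = false := by
        simp only [botleftUp, Prod.mk.injEq, decide_eq_false_iff_not]
        tauto
      rw [hR]
      rcases Nat.mod_two_eq_zero_or_one m with hme | hmo
      · refine filled_false_of _ _ ?_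
        rw [show (2*(d+N-1)+m)/2 = d+N-1+m/2 from by omega,
            show 2^K+d+k = 2^K+(d+k) from by omega]
        by_cases hk' : k ≤ N-2
        · exact hole K (d+k) (d+N-1+m/2) (by omega) (by omega)
        · have hkN : k = N-1 := by omega
          have hm2 : 2 ≤ m := by omega
          rw [H1 K (d+k) (d+N-1+m/2) (by omega) (by omega),
              Nat.choose_eq_zero_of_lt (by omega)]
      · exact filled_odd _ _ (by omega)
  next h =>
    have hR : botleftUp N (k, m) = false := by
      simp only [botleftUp, Prod.mk.injEq, decide_eq_false_iff_not]
      intro ⟨h1', h2'⟩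
      exact h (by omega)
    rw [hR]

lemma botright_witness (K e N : ℕ) (hN : 2 ≤ N) (h2 : e + 2*N ≤ 2^K) :
    upPattern N (2^K + e) (2*(2^K - N + 1)) = botrightUp N := by
  have hK : 2*N ≤ (2:ℕ)^K := by omega
  funext q
  obtain ⟨k, m⟩ := q
  simp only [upPattern]
  split
  next h =>
    obtain ⟨hk, hm⟩ := h
    by_cases hq : k = N-1 ∧ m = 2*(N-1)
    · obtain ⟨hq1, hq2⟩ := hq
      subst hq1; subst hq2
      have hR : botrightUp N (N-1, 2*(N-1)) = true := by simp [botrightUp]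
      rw [hR]
      refine filled_true _ _ (by omega) ?_
      rw [show (2*(2^K-N+1)+2*(N-1))/2 = 2^K+0 from by omega,
          show 2^K+e+(N-1) = 2^K+(e+N-1) from by omega,
          H2 K (e+N-1) 0 (by omega) (by omega), Nat.choose_zero_right]
    · have hR : botrightUp N (k, m) = false := by
        simp only [botrightUp, Prod.mk.injEq, decide_eq_false_iff_not]
        tauto
      rw [hR]
      rcases Nat.mod_two_eq_zero_or_one m with hme | hmo
      · have hmm : m/2 ≤ N-2 := by omega
        refine filled_false_of _ _ ?_
        rw [show (2*(2^K-N+1)+m)/2 = 2^K-N+1+m/2 from by omega,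
            show 2^K+e+k = 2^K+(e+k) from by omega]
        exact hole K (e+k) (2^K-N+1+m/2) (by omega) (by omega)
      · exact filled_odd _ _ (by omega)
  next h =>
    have hR : botrightUp N (k, m) = false := by
      simp only [botrightUp, Prod.mk.injEq, decide_eq_false_iff_not]
      intro ⟨h1', h2'⟩
      exact h (by omega)
    rw [hR]


lemma case1 (N r c r' c' : ℕ) (hN : N % 2 = 0)
    (hr : r % 2 = 0) (hc : c % 4 = 0) (hr' : r' % 2 = 1) (hc' : c' % 4 = 0)
    (E : ∀ k m, k < N → m ≤ 2*k → filled (r+k) (c+m) = filled (r'+k) (c'+m)) :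
    ∀ k m, k < N → m ≤ 2*k → filled (r+k) (c+m) = false := by
  intro k m hk hm
  by_contra hT0
  have hT : filled (r+k) (c+m) = true := by revert hT0; cases filled (r+k) (c+m) <;> simp
  have hB : filled (r'+k) (c'+m) = true := by rw [← E k m hk hm]; exact hT
  have hm2 : m % 2 = 0 := by
    by_contra h
    rw [filled_odd (r+k) (c+m) (by omega)] at hT; simp at hT
  rcases Nat.mod_two_eq_zero_or_one k with hke | hko
  · have hm4 : m % 4 = 0 := by
      by_contra h
      rw [filled_e2 (r+k) (c+m) (by omega) (by omega)] at hT; simp at hT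
    have h1 : filled (r+k+1) (c+m) = true := by
      rw [filled_ud (r+k) (c+m) (by omega) (by omega)]; exact hT
    have h2 : filled (r+k+1) (c+m+2) = true := by
      rw [filled_pair (r+k+1) (c+m) (by omega) (by omega)]; exact h1
    have h3 := E (k+1) (m+2) (by omega) (by omega)
    rw [show r+(k+1) = r+k+1 from by omega, show c+(m+2) = c+m+2 from by omega] at h3
    rw [h3] at h2
    rw [filled_e2 (r'+(k+1)) (c'+(m+2)) (by omega) (by omega)] at h2
    simp at h2
  · have hm4 : m % 4 = 0 := by
      by_contra h
      rw [filled_e2 (r'+k) (c'+m) (by omega) (by omega)] at hB; simp at hB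
    have h2 : filled (r+k) (c+m+2) = true := by
      rw [filled_pair (r+k) (c+m) (by omega) (by omega)]; exact hT
    have h3 := E k (m+2) hk (by omega)
    rw [show c+(m+2) = c+m+2 from by omega] at h3
    rw [h3] at h2
    rw [filled_e2 (r'+k) (c'+(m+2)) (by omega) (by omega)] at h2
    simp at h2

lemma case2 (N r c r' c' : ℕ) (hN : N % 2 = 0)
    (hr : r % 2 = 0) (hc : c % 4 = 0) (hr' : r' % 2 = 1) (hc' : c' % 4 = 2)
    (E : ∀ k m, k < N → m ≤ 2*k → filled (r+k) (c+m) = filled (r'+k) (c'+m)) :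
    ∀ k m, k < N → m ≤ 2*k → filled (r+k) (c+m) = false := by
  intro k m hk hm
  by_contra hT0
  have hT : filled (r+k) (c+m) = true := by revert hT0; cases filled (r+k) (c+m) <;> simp
  have hB : filled (r'+k) (c'+m) = true := by rw [← E k m hk hm]; exact hT
  have hm2 : m % 2 = 0 := by
    by_contra h
    rw [filled_odd (r+k) (c+m) (by omega)] at hT; simp at hT
  rcases Nat.mod_two_eq_zero_or_one k with hke | hko
  · have hm4 : m % 4 = 0 := by
      by_contra h
      rw [filled_e2 (r+k) (c+m) (by omega) (by omega)] at hT; simp at hT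
    have h1 : filled (r+k+1) (c+m) = true := by
      rw [filled_ud (r+k) (c+m) (by omega) (by omega)]; exact hT
    have h3 := E (k+1) m (by omega) (by omega)
    rw [show r+(k+1) = r+k+1 from by omega] at h3
    rw [h3] at h1
    rw [filled_e2 (r'+(k+1)) (c'+m) (by omega) (by omega)] at h1
    simp at h1
  · have hm4 : m % 4 = 2 := by
      by_contra h
      rw [filled_e2 (r'+k) (c'+m) (by omega) (by omega)] at hB; simp at hB
    by_cases hkN : k+1 < N
    · have h1 : filled (r'+k+1) (c'+m) = true := by
        rw [filled_ud (r'+k) (c'+m) (by omega) (by omega)]; exact hB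
      have h3 := E (k+1) m hkN (by omega)
      rw [show r'+(k+1) = r'+k+1 from by omega] at h3
      rw [← h3] at h1
      rw [filled_e2 (r+(k+1)) (c+m) (by omega) (by omega)] at h1
      simp at h1
    · have hm2' : 2 ≤ m := by omega
      have h1 : filled (r+k) (c+(m-2)) = true := by
        rw [← filled_pair (r+k) (c+(m-2)) (by omega) (by omega),
            show c+(m-2)+2 = c+m from by omega]
        exact hT
      have h3 := E k (m-2) hk (by omega)
      rw [h3] at h1
      rw [filled_e2 (r'+k) (c'+(m-2)) (by omega) (by omega)] at h1
      simp at h1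

lemma case3 (N r c r' c' : ℕ) (hN : N % 2 = 0)
    (hr : r % 2 = 0) (hc : c % 4 = 0) (hr' : r' % 2 = 0) (hc' : c' % 4 = 2)
    (E : ∀ k m, k < N → m ≤ 2*k → filled (r+k) (c+m) = filled (r'+k) (c'+m)) :
    ∀ k m, k < N → m ≤ 2*k → filled (r+k) (c+m) = false := by
  intro k m hk hm
  by_contra hT0
  have hT : filled (r+k) (c+m) = true := by revert hT0; cases filled (r+k) (c+m) <;> simp
  have hB : filled (r'+k) (c'+m) = true := by rw [← E k m hk hm]; exact hT
  have hm2 : m % 2 = 0 := by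
    by_contra h
    rw [filled_odd (r+k) (c+m) (by omega)] at hT; simp at hT
  have hko : k % 2 = 1 := by
    rcases Nat.mod_two_eq_zero_or_one k with hke | hko
    · have hm4 : m % 4 = 0 := by
        by_contra h
        rw [filled_e2 (r+k) (c+m) (by omega) (by omega)] at hT; simp at hT
      rw [filled_e2 (r'+k) (c'+m) (by omega) (by omega)] at hB; simp at hB
    · exact hko
  have hm4 : m % 4 = 0 ∨ m % 4 = 2 := by omega
  rcases hm4 with hm4 | hm4
  · have hmlt : m ≤ 2*(k-1) := by omega
    have h1 : filled (r+(k-1)) (c+m) = true := by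
      rw [← filled_ud (r+(k-1)) (c+m) (by omega) (by omega),
          show r+(k-1)+1 = r+k from by omega]
      exact hT
    have h3 := E (k-1) m (by omega) hmlt
    rw [h3] at h1
    rw [filled_e2 (r'+(k-1)) (c'+m) (by omega) (by omega)] at h1
    simp at h1
  · by_cases hme : m < 2*k
    · have hmlt : m ≤ 2*(k-1) := by omega
      have h1 : filled (r'+(k-1)) (c'+m) = true := by
        rw [← filled_ud (r'+(k-1)) (c'+m) (by omega) (by omega),
            show r'+(k-1)+1 = r'+k from by omega]
        exact hB
      have h3 := E (k-1) m (by omega) hmlt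
      rw [← h3] at h1
      rw [filled_e2 (r+(k-1)) (c+m) (by omega) (by omega)] at h1
      simp at h1
    · have hm2' : 2 ≤ m := by omega
      have h1 : filled (r+k) (c+(m-2)) = true := by
        rw [← filled_pair (r+k) (c+(m-2)) (by omega) (by omega),
            show c+(m-2)+2 = c+m from by omega]
        exact hT
      have h2 : filled (r+(k-1)) (c+(m-2)) = true := by
        rw [← filled_ud (r+(k-1)) (c+(m-2)) (by omega) (by omega),
            show r+(k-1)+1 = r+k from by omega]
        exact h1
      have h3 := E (k-1) (m-2) (by omega) (by omega)
      rw [h3] at h2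
      rw [filled_e2 (r'+(k-1)) (c'+(m-2)) (by omega) (by omega)] at h2
      simp at h2

lemma case4 (N r c r' c' : ℕ) (hN : N % 2 = 0)
    (hr : r % 2 = 1) (hc : c % 4 = 0) (hr' : r' % 2 = 1) (hc' : c' % 4 = 2)
    (E : ∀ k m, k < N → m ≤ 2*k → filled (r+k) (c+m) = filled (r'+k) (c'+m)) :
    ∀ k m, k < N → m ≤ 2*k → ¬(k = 0 ∧ m = 0) → filled (r+k) (c+m) = false := by
  intro k m hk hm hq
  by_contra hT0
  have hT : filled (r+k) (c+m) = true := by revert hT0; cases filled (r+k) (c+m) <;> simp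
  have hB : filled (r'+k) (c'+m) = true := by rw [← E k m hk hm]; exact hT
  have hm2 : m % 2 = 0 := by
    by_contra h
    rw [filled_odd (r+k) (c+m) (by omega)] at hT; simp at hT
  have hke : k % 2 = 0 := by
    rcases Nat.mod_two_eq_zero_or_one k with hke | hko
    · exact hke
    · have hm4 : m % 4 = 0 := by
        by_contra h
        rw [filled_e2 (r+k) (c+m) (by omega) (by omega)] at hT; simp at hT
      rw [filled_e2 (r'+k) (c'+m) (by omega) (by omega)] at hB; simp at hB
  have hk2 : 2 ≤ k := by omega
  have hm4 : m % 4 = 0 ∨ m % 4 = 2 := by omega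
  rcases hm4 with hm4 | hm4
  · by_cases hme : m < 2*k
    · have h1 : filled (r+(k-1)) (c+m) = true := by
        rw [← filled_ud (r+(k-1)) (c+m) (by omega) (by omega),
            show r+(k-1)+1 = r+k from by omega]
        exact hT
      have h3 := E (k-1) m (by omega) (by omega)
      rw [h3] at h1
      rw [filled_e2 (r'+(k-1)) (c'+m) (by omega) (by omega)] at h1
      simp at h1
    · have hmeq : m = 2*k := by omega
      have h1B : filled (r'+k) (c'+(m-2)) = true := by
        rw [← filled_pair (r'+k) (c'+(m-2)) (by omega) (by omega),
            show c'+(m-2)+2 = c'+m from by omega]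
        exact hB
      have h2 : filled (r'+(k-1)) (c'+(m-2)) = true := by
        rw [← filled_ud (r'+(k-1)) (c'+(m-2)) (by omega) (by omega),
            show r'+(k-1)+1 = r'+k from by omega]
        exact h1B
      have h4 := E (k-1) (m-2) (by omega) (by omega)
      rw [← h4] at h2
      rw [filled_e2 (r+(k-1)) (c+(m-2)) (by omega) (by omega)] at h2
      simp at h2
  · have hmlt : m ≤ 2*(k-1) := by omega
    have h1 : filled (r'+(k-1)) (c'+m) = true := by
      rw [← filled_ud (r'+(k-1)) (c'+m) (by omega) (by omega),
          show r'+(k-1)+1 = r'+k from by omega]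
      exact hB
    have h3 := E (k-1) m (by omega) hmlt
    rw [← h3] at h1
    rw [filled_e2 (r+(k-1)) (c+m) (by omega) (by omega)] at h1
    simp at h1

lemma case5 (N r c r' c' : ℕ) (hN : N % 2 = 0)
    (hr : r % 2 = 1) (hc : c % 4 = 0) (hr' : r' % 2 = 0) (hc' : c' % 4 = 2)
    (E : ∀ k m, k < N → m ≤ 2*k → filled (r+k) (c+m) = filled (r'+k) (c'+m)) :
    ∀ k m, k < N → m ≤ 2*k → ¬(k = N-1 ∧ m = 0) → filled (r+k) (c+m) = false := by
  intro k m hk hm hq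
  by_contra hT0
  have hT : filled (r+k) (c+m) = true := by revert hT0; cases filled (r+k) (c+m) <;> simp
  have hB : filled (r'+k) (c'+m) = true := by rw [← E k m hk hm]; exact hT
  have hm2 : m % 2 = 0 := by
    by_contra h
    rw [filled_odd (r+k) (c+m) (by omega)] at hT; simp at hT
  have hko : k % 2 = 1 := by
    rcases Nat.mod_two_eq_zero_or_one k with hke | hko
    · exfalso
      have hm4 : m % 4 = 2 := by
        by_contra h
        rw [filled_e2 (r'+k) (c'+m) (by omega) (by omega)] at hB; simp at hB
      have h1 : filled (r+k) (c+(m-2)) = true := by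
        rw [← filled_pair (r+k) (c+(m-2)) (by omega) (by omega),
            show c+(m-2)+2 = c+m from by omega]
        exact hT
      have h3 := E k (m-2) hk (by omega)
      rw [h3] at h1
      rw [filled_e2 (r'+k) (c'+(m-2)) (by omega) (by omega)] at h1
      simp at h1
    · exact hko
  have hm4 : m % 4 = 0 := by
    by_contra h
    rw [filled_e2 (r+k) (c+m) (by omega) (by omega)] at hT; simp at hT
  by_cases hkN : k+1 < N
  · have h1 : filled (r+k+1) (c+m) = true := by
      rw [filled_ud (r+k) (c+m) (by omega) (by omega)]; exact hT
    have h3 := E (k+1) m hkN (by omega)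
    rw [show r+(k+1) = r+k+1 from by omega] at h3
    rw [h3] at h1
    rw [filled_e2 (r'+(k+1)) (c'+m) (by omega) (by omega)] at h1
    simp at h1
  · have hkeq : k = N-1 := by omega
    have hm0 : m ≠ 0 := by tauto
    have hm4' : 4 ≤ m := by omega
    have h1 : filled (r'+k) (c'+(m-2)) = true := by
      rw [← filled_pair (r'+k) (c'+(m-2)) (by omega) (by omega),
          show c'+(m-2)+2 = c'+m from by omega]
      exact hB
    have h3 := E k (m-2) hk (by omega)
    rw [← h3] at h1
    rw [filled_e2 (r+k) (c+(m-2)) (by omega) (by omega)] at h1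
    simp at h1

lemma case6 (N r c r' c' : ℕ) (hN : N % 2 = 0)
    (hr : r % 2 = 1) (hc : c % 4 = 2) (hr' : r' % 2 = 0) (hc' : c' % 4 = 2)
    (E : ∀ k m, k < N → m ≤ 2*k → filled (r+k) (c+m) = filled (r'+k) (c'+m)) :
    ∀ k m, k < N → m ≤ 2*k → ¬(k = N-1 ∧ m = 2*(N-1)) → filled (r+k) (c+m) = false := by
  intro k m hk hm hq
  by_contra hT0
  have hT : filled (r+k) (c+m) = true := by revert hT0; cases filled (r+k) (c+m) <;> simp
  have hB : filled (r'+k) (c'+m) = true := by rw [← E k m hk hm]; exact hT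
  have hm2 : m % 2 = 0 := by
    by_contra h
    rw [filled_odd (r+k) (c+m) (by omega)] at hT; simp at hT
  have hko : k % 2 = 1 := by
    rcases Nat.mod_two_eq_zero_or_one k with hke | hko
    · exfalso
      have hm4 : m % 4 = 2 := by
        by_contra h
        rw [filled_e2 (r'+k) (c'+m) (by omega) (by omega)] at hB; simp at hB
      have hmlt : m+2 ≤ 2*k := by omega
      have h1 : filled (r+k) (c+m+2) = true := by
        rw [filled_pair (r+k) (c+m) (by omega) (by omega)]; exact hT
      have h3 := E k (m+2) hk (by omega)
      rw [show c+(m+2) = c+m+2 from by omega] at h3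
      rw [h3] at h1
      rw [filled_e2 (r'+k) (c'+(m+2)) (by omega) (by omega)] at h1
      simp at h1
    · exact hko
  have hm4 : m % 4 = 2 := by
    by_contra h
    rw [filled_e2 (r+k) (c+m) (by omega) (by omega)] at hT; simp at hT
  by_cases hkN : k+1 < N
  · have h1 : filled (r+k+1) (c+m) = true := by
      rw [filled_ud (r+k) (c+m) (by omega) (by omega)]; exact hT
    have h2 : filled (r+k+1) (c+m+2) = true := by
      rw [filled_pair (r+k+1) (c+m) (by omega) (by omega)]; exact h1
    have h3 := E (k+1) (m+2) hkN (by omega)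
    rw [show r+(k+1) = r+k+1 from by omega, show c+(m+2) = c+m+2 from by omega] at h3
    rw [h3] at h2
    rw [filled_e2 (r'+(k+1)) (c'+(m+2)) (by omega) (by omega)] at h2
    simp at h2
  · have hkeq : k = N-1 := by omega
    have hmne : m ≠ 2*(N-1) := by tauto
    have hmlt : m+2 ≤ 2*k := by omega
    have h1 : filled (r'+k) (c'+m+2) = true := by
      rw [filled_pair (r'+k) (c'+m) (by omega) (by omega)]; exact hB
    have h3 := E k (m+2) hk (by omega)
    rw [show c'+(m+2) = c'+m+2 from by omega] at h3
    rw [← h3] at h1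
    rw [filled_e2 (r+k) (c+(m+2)) (by omega) (by omega)] at h1
    simp at h1

end SierpAux

theorem sierpinski_up_intersections_even (n : ℕ) (hn : 1 ≤ n) :
    PupRC (2 * n) 0 0 ∩ PupRC (2 * n) 1 0 = {blankUp} ∧
    PupRC (2 * n) 0 0 ∩ PupRC (2 * n) 1 2 = {blankUp} ∧
    PupRC (2 * n) 0 0 ∩ PupRC (2 * n) 0 2 = {blankUp} ∧
    PupRC (2 * n) 1 0 ∩ PupRC (2 * n) 1 2 = {blankUp, topUp} ∧
    PupRC (2 * n) 1 0 ∩ PupRC (2 * n) 0 2 = {blankUp, botleftUp (2 * n)} ∧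
    PupRC (2 * n) 1 2 ∩ PupRC (2 * n) 0 2 = {blankUp, botrightUp (2 * n)} := by
  have hN : (2*n) % 2 = 0 := by omega
  have hN2 : 2 ≤ 2*n := by omega
  have hp16 : (2:ℕ)^(n+4) = 16 * 2^n := by ring
  have hlt : n < 2^n := Nat.lt_two_pow_self
  have hbig : 4*n + 10 ≤ 2^(n+4) := by omega
  -- memberships of the special patterns
  have hblank00 : blankUp ∈ PupRC (2*n) 0 0 :=
    ⟨2^(n+4) + 0, 2*(2*n+2), by omega, by omega, by omega, by omega,
      (SierpAux.blank_witness (n+4) 0 (2*n+2) (2*n) (by omega) (by omega)).symm⟩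
  have hblank10 : blankUp ∈ PupRC (2*n) 1 0 :=
    ⟨2^(n+4) + 1, 2*(2*n+2), by omega, by omega, by omega, by omega,
      (SierpAux.blank_witness (n+4) 1 (2*n+2) (2*n) (by omega) (by omega)).symm⟩
  have hblank12 : blankUp ∈ PupRC (2*n) 1 2 :=
    ⟨2^(n+4) + 1, 2*(2*n+3), by omega, by omega, by omega, by omega,
      (SierpAux.blank_witness (n+4) 1 (2*n+3) (2*n) (by omega) (by omega)).symm⟩
  have hblank02 : blankUp ∈ PupRC (2*n) 0 2 :=
    ⟨2^(n+4) + 0, 2*(2*n+3), by omega, by omega, by omega, by omega,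
      (SierpAux.blank_witness (n+4) 0 (2*n+3) (2*n) (by omega) (by omega)).symm⟩
  have htop10 : topUp ∈ PupRC (2*n) 1 0 :=
    ⟨2^(n+4) - 1, 2*(2*n), by omega, by omega, by omega, by omega,
      (SierpAux.top_witness (n+4) (2*n) (2*n) (by omega) (by omega) (by omega)).symm⟩
  have htop12 : topUp ∈ PupRC (2*n) 1 2 :=
    ⟨2^(n+4) - 1, 2*(2*n+1), by omega, by omega, by omega, by omega,
      (SierpAux.top_witness (n+4) (2*n+1) (2*n) (by omega) (by omega) (by omega)).symm⟩
  have hbl10 : botleftUp (2*n) ∈ PupRC (2*n) 1 0 :=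
    ⟨2^(n+4) + 1, 2*(1+2*n-1), by omega, by omega, by omega, by omega,
      (SierpAux.botleft_witness (n+4) 1 (2*n) (by omega) (by omega) (by omega)).symm⟩
  have hbl02 : botleftUp (2*n) ∈ PupRC (2*n) 0 2 :=
    ⟨2^(n+4) + 2, 2*(2+2*n-1), by omega, by omega, by omega, by omega,
      (SierpAux.botleft_witness (n+4) 2 (2*n) (by omega) (by omega) (by omega)).symm⟩
  have hbr12 : botrightUp (2*n) ∈ PupRC (2*n) 1 2 :=
    ⟨2^(n+4) + 1, 2*(2^(n+4) - 2*n + 1), by omega, by omega, by omega, by omega,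
      (SierpAux.botright_witness (n+4) 1 (2*n) (by omega) (by omega)).symm⟩
  have hbr02 : botrightUp (2*n) ∈ PupRC (2*n) 0 2 :=
    ⟨2^(n+4) + 0, 2*(2^(n+4) - 2*n + 1), by omega, by omega, by omega, by omega,
      (SierpAux.botright_witness (n+4) 0 (2*n) (by omega) (by omega)).symm⟩
  refine ⟨?_, ?_, ?_, ?_, ?_, ?_⟩
  · -- (0,0) ∩ (1,0) = {blank}
    refine Set.eq_singleton_iff_unique_mem.mpr ⟨⟨hblank00, hblank10⟩, ?_⟩
    rintro p ⟨⟨r, c, hc2, hcr, hrm, hcm, rfl⟩, r', c', hc2', hcr', hrm', hcm', hp'⟩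
    have E : ∀ k m, k < 2*n → m ≤ 2*k → filled (r+k) (c+m) = filled (r'+k) (c'+m) := by
      intro k m hk hm
      have h := congrFun hp' (k, m)
      simpa [upPattern, hk, hm] using h
    funext q; obtain ⟨k, m⟩ := q
    simp only [upPattern, blankUp]
    split
    next h => exact SierpAux.case1 (2*n) r c r' c' hN hrm hcm hrm' hcm' E k m h.1 h.2
    next => rfl
  · -- (0,0) ∩ (1,2) = {blank}
    refine Set.eq_singleton_iff_unique_mem.mpr ⟨⟨hblank00, hblank12⟩, ?_⟩
    rintro p ⟨⟨r, c, hc2, hcr, hrm, hcm, rfl⟩, r', c', hc2', hcr', hrm', hcm', hp'⟩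
    have E : ∀ k m, k < 2*n → m ≤ 2*k → filled (r+k) (c+m) = filled (r'+k) (c'+m) := by
      intro k m hk hm
      have h := congrFun hp' (k, m)
      simpa [upPattern, hk, hm] using h
    funext q; obtain ⟨k, m⟩ := q
    simp only [upPattern, blankUp]
    split
    next h => exact SierpAux.case2 (2*n) r c r' c' hN hrm hcm hrm' hcm' E k m h.1 h.2
    next => rfl
  · -- (0,0) ∩ (0,2) = {blank}
    refine Set.eq_singleton_iff_unique_mem.mpr ⟨⟨hblank00, hblank02⟩, ?_⟩
    rintro p ⟨⟨r, c, hc2, hcr, hrm, hcm, rfl⟩, r', c', hc2', hcr', hrm', hcm', hp'⟩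
    have E : ∀ k m, k < 2*n → m ≤ 2*k → filled (r+k) (c+m) = filled (r'+k) (c'+m) := by
      intro k m hk hm
      have h := congrFun hp' (k, m)
      simpa [upPattern, hk, hm] using h
    funext q; obtain ⟨k, m⟩ := q
    simp only [upPattern, blankUp]
    split
    next h => exact SierpAux.case3 (2*n) r c r' c' hN hrm hcm hrm' hcm' E k m h.1 h.2
    next => rfl
  · -- (1,0) ∩ (1,2) = {blank, top}
    ext p
    simp only [Set.mem_insert_iff, Set.mem_singleton_iff]
    constructor
    · rintro ⟨⟨r, c, hc2, hcr, hrm, hcm, rfl⟩, r', c', hc2', hcr', hrm', hcm', hp'⟩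
      have E : ∀ k m, k < 2*n → m ≤ 2*k → filled (r+k) (c+m) = filled (r'+k) (c'+m) := by
        intro k m hk hm
        have h := congrFun hp' (k, m)
        simpa [upPattern, hk, hm] using h
      have key := SierpAux.case4 (2*n) r c r' c' hN hrm hcm hrm' hcm' E
      by_cases h0 : filled (r+0) (c+0) = true
      · right
        funext q; obtain ⟨k, m⟩ := q
        simp only [upPattern]
        split
        next h =>
          by_cases hq : k = 0 ∧ m = 0
          · obtain ⟨hq1, hq2⟩ := hq; subst hq1; subst hq2
            have hR : topUp ((0:ℕ), (0:ℕ)) = true := by simp [topUp]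
            rw [hR]; exact h0
          · rw [key k m h.1 h.2 hq]
            have hR : topUp (k, m) = false := by
              simp only [topUp, Prod.mk.injEq, decide_eq_false_iff_not]; tauto
            rw [hR]
        next h =>
          have hR : topUp (k, m) = false := by
            simp only [topUp, Prod.mk.injEq, decide_eq_false_iff_not]
            intro ⟨h1', h2'⟩
            exact h (by omega)
          rw [hR]
      · left
        funext q; obtain ⟨k, m⟩ := q
        simp only [upPattern, blankUp]
        split
        next h =>
          by_cases hq : k = 0 ∧ m = 0
          · obtain ⟨hq1, hq2⟩ := hq; subst hq1; subst hq2
            revert h0; cases filled (r+0) (c+0) <;> simp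
          · exact key k m h.1 h.2 hq
        next => rfl
    · rintro (rfl | rfl)
      · exact ⟨hblank10, hblank12⟩
      · exact ⟨htop10, htop12⟩
  · -- (1,0) ∩ (0,2) = {blank, botleft}
    ext p
    simp only [Set.mem_insert_iff, Set.mem_singleton_iff]
    constructor
    · rintro ⟨⟨r, c, hc2, hcr, hrm, hcm, rfl⟩, r', c', hc2', hcr', hrm', hcm', hp'⟩
      have E : ∀ k m, k < 2*n → m ≤ 2*k → filled (r+k) (c+m) = filled (r'+k) (c'+m) := by
        intro k m hk hm
        have h := congrFun hp' (k, m)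
        simpa [upPattern, hk, hm] using h
      have key := SierpAux.case5 (2*n) r c r' c' hN hrm hcm hrm' hcm' E
      by_cases h0 : filled (r+(2*n-1)) (c+0) = true
      · right
        funext q; obtain ⟨k, m⟩ := q
        simp only [upPattern]
        split
        next h =>
          by_cases hq : k = 2*n-1 ∧ m = 0
          · obtain ⟨hq1, hq2⟩ := hq; subst hq1; subst hq2
            have hR : botleftUp (2*n) (2*n-1, 0) = true := by simp [botleftUp]
            rw [hR]; exact h0
          · rw [key k m h.1 h.2 hq]
            have hR : botleftUp (2*n) (k, m) = false := by
              simp only [botleftUp, Prod.mk.injEq, decide_eq_false_iff_not]; tauto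
            rw [hR]
        next h =>
          have hR : botleftUp (2*n) (k, m) = false := by
            simp only [botleftUp, Prod.mk.injEq, decide_eq_false_iff_not]
            intro ⟨h1', h2'⟩
            exact h (by omega)
          rw [hR]
      · left
        funext q; obtain ⟨k, m⟩ := q
        simp only [upPattern, blankUp]
        split
        next h =>
          by_cases hq : k = 2*n-1 ∧ m = 0
          · obtain ⟨hq1, hq2⟩ := hq; subst hq1; subst hq2
            revert h0; cases filled (r+(2*n-1)) (c+0) <;> simp
          · exact key k m h.1 h.2 hq
        next => rfl
    · rintro (rfl | rfl)
      · exact ⟨hblank10, hblank02⟩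
      · exact ⟨hbl10, hbl02⟩
  · -- (1,2) ∩ (0,2) = {blank, botright}
    ext p
    simp only [Set.mem_insert_iff, Set.mem_singleton_iff]
    constructor
    · rintro ⟨⟨r, c, hc2, hcr, hrm, hcm, rfl⟩, r', c', hc2', hcr', hrm', hcm', hp'⟩
      have E : ∀ k m, k < 2*n → m ≤ 2*k → filled (r+k) (c+m) = filled (r'+k) (c'+m) := by
        intro k m hk hm
        have h := congrFun hp' (k, m)
        simpa [upPattern, hk, hm] using h
      have key := SierpAux.case6 (2*n) r c r' c' hN hrm hcm hrm' hcm' E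
      by_cases h0 : filled (r+(2*n-1)) (c+2*(2*n-1)) = true
      · right
        funext q; obtain ⟨k, m⟩ := q
        simp only [upPattern]
        split
        next h =>
          by_cases hq : k = 2*n-1 ∧ m = 2*(2*n-1)
          · obtain ⟨hq1, hq2⟩ := hq; subst hq1; subst hq2
            have hR : botrightUp (2*n) (2*n-1, 2*(2*n-1)) = true := by simp [botrightUp]
            rw [hR]; exact h0
          · rw [key k m h.1 h.2 hq]
            have hR : botrightUp (2*n) (k, m) = false := by
              simp only [botrightUp, Prod.mk.injEq, decide_eq_false_iff_not]; tauto
            rw [hR]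
        next h =>
          have hR : botrightUp (2*n) (k, m) = false := by
            simp only [botrightUp, Prod.mk.injEq, decide_eq_false_iff_not]
            intro ⟨h1', h2'⟩
            exact h (by omega)
          rw [hR]
      · left
        funext q; obtain ⟨k, m⟩ := q
        simp only [upPattern, blankUp]
        split
        next h =>
          by_cases hq : k = 2*n-1 ∧ m = 2*(2*n-1)
          · obtain ⟨hq1, hq2⟩ := hq; subst hq1; subst hq2
            revert h0; cases filled (r+(2*n-1)) (c+2*(2*n-1)) <;> simp
          · exact key k m h.1 h.2 hq
        next => rfl
    · rintro (rfl | rfl)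
      · exact ⟨hblank12, hblank02⟩
      · exact ⟨hbr12, hbr02⟩
end
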